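/- arXiv:2407.12288 — 4 statements merged into one kernel-verified Lean document; each statement's English description precedes it below -/
import Mathlib

section
/- Let Θ, Θ̃, 𝒳, 𝒴 be finite sets, π a pmf on Θ, λ(· | ν) a pmf on Θ̃ for each ν ∈ Θ, μ a pmf on 𝒳, and k(· | ν, x) a pmf on 𝒴. Let T ≥ 1 and suppose θ, θ̃, X_0, Y_1, …, X_{T−1}, Y_T have joint pmf π(ν) · λ(τ | ν) · ∏_{s=0}^{T−1} μ(x_s) · k(y_{s+1} | ν, x_s) (so the data pairs are i.i.d. given θ, the inputs are independent of θ, and θ̃ is conditionally independent of the data given θ). Then I( (X_{0:T−1}, Y_{1:T}) ; θ | θ̃ ) / T ≤ I( Y_1 ; θ | θ̃, X_0 ): the average distortion over the whole history is bounded by the single-sample distortion. -/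
/-!
Statement 8 (distortion upper bound for iid data): if the data pairs `(X_s, Y_{s+1})` are i.i.d.
given `θ`, the inputs are independent of `θ`, and the compression `θ̃` is conditionally
independent of the data given `θ`, then
`I((X_{0:T−1}, Y_{1:T}); θ | θ̃)/T ≤ I(Y_1; θ | θ̃, X_0)`.
Here `Y i` (for `i : Fin T`) denotes the label `Y_{i+1}`.
-/

open scoped Classical

noncomputable section

/-- Probability of the event `X = a` under the pmf `p` on a finite sample space. -/
def pr {Ω : Type*} [Fintype Ω] (p : Ω → ℝ) {A : Type*} (X : Ω → A) (a : A) : ℝ :=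
  ∑ ω, if X ω = a then p ω else 0

/-- Shannon entropy of a random variable (in nats). -/
def entropy {Ω : Type*} [Fintype Ω] (p : Ω → ℝ) {A : Type*} [Fintype A] (X : Ω → A) : ℝ :=
  ∑ a, Real.negMulLog (pr p X a)

/-- Conditional mutual information `I(X;Y|Z) = H(X,Z) + H(Y,Z) - H(X,Y,Z) - H(Z)` (in nats). -/
def condMutualInfo {Ω : Type*} [Fintype Ω] (p : Ω → ℝ) {A B C : Type*}
    [Fintype A] [Fintype B] [Fintype C] (X : Ω → A) (Y : Ω → B) (Z : Ω → C) : ℝ :=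
  entropy p (fun ω => (X ω, Z ω)) + entropy p (fun ω => (Y ω, Z ω))
    - entropy p (fun ω => ((X ω, Y ω), Z ω)) - entropy p Z

section Helpers

variable {Ω : Type*} [Fintype Ω] (p : Ω → ℝ)

lemma pr_nonneg (hp0 : ∀ ω, 0 ≤ p ω) {A : Type*} (X : Ω → A) (a : A) : 0 ≤ pr p X a := by
  refine Finset.sum_nonneg fun ω _ => ?_
  split <;> simp [hp0 ω]

lemma pr_comp {A B : Type*} [Fintype A] (V : Ω → A) (F : A → B) (b : B) :
    pr p (fun ω => F (V ω)) b = ∑ a, if F a = b then pr p V a else 0 := by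
  unfold pr
  have h : ∀ a : A, (if F a = b then ∑ ω, if V ω = a then p ω else 0 else 0)
      = ∑ ω, if V ω = a ∧ F a = b then p ω else 0 := by
    intro a; split <;> simp_all
  rw [Finset.sum_congr rfl fun a _ => h a, Finset.sum_comm]
  refine Finset.sum_congr rfl fun ω _ => ?_
  rw [Finset.sum_eq_single (V ω)]
  · simp
  · intro a _ ha
    rw [if_neg]; rintro ⟨h1, _⟩; exact ha h1.symm
  · simp

lemma pr_comp_inj {A B : Type*} [Fintype A] (V : Ω → A) (f : A → B)
    (hf : Function.Injective f) (a : A) :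
    pr p (fun ω => f (V ω)) (f a) = pr p V a := by
  unfold pr
  refine Finset.sum_congr rfl fun ω _ => by simp [hf.eq_iff]

lemma sum_pr (hp1 : ∑ ω, p ω = 1) {A : Type*} [Fintype A] (V : Ω → A) :
    ∑ a, pr p V a = 1 := by
  unfold pr
  rw [Finset.sum_comm]
  simpa using hp1

lemma lotus {A B : Type*} [Fintype A] [Fintype B] (V : Ω → A) (F : A → B) (φ : B → ℝ) :
    ∑ b, pr p (fun ω => F (V ω)) b * φ b = ∑ a, pr p V a * φ (F a) := by
  simp only [pr_comp p V F, Finset.sum_mul, ite_mul, zero_mul]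
  rw [Finset.sum_comm]
  refine Finset.sum_congr rfl fun a _ => ?_
  rw [Finset.sum_eq_single (F a)]
  · simp
  · intro b _ hb; rw [if_neg (fun h => hb h.symm)]
  · simp

lemma pr_le_comp (hp0 : ∀ ω, 0 ≤ p ω) {A B : Type*} (V : Ω → A) (F : A → B) (a : A) :
    pr p V a ≤ pr p (fun ω => F (V ω)) (F a) := by
  refine Finset.sum_le_sum fun ω _ => ?_
  by_cases h : V ω = a
  · simp [h]
  · simp only [if_neg h]; split <;> simp [hp0 ω]

lemma entropy_congr {A : Type*} [Fintype A] {Ω' : Type*} [Fintype Ω']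
    {q : Ω' → ℝ} {X : Ω → A} {X' : Ω' → A} (h : ∀ a, pr p X a = pr q X' a) :
    entropy p X = entropy q X' :=
  Finset.sum_congr rfl fun a _ => by rw [h a]

lemma entropy_comp_inj {A B : Type*} [Fintype A] [Fintype B] (V : Ω → A) (f : A → B)
    (hf : Function.Injective f) :
    entropy p (fun ω => f (V ω)) = entropy p V := by
  unfold entropy
  have h0 : ∀ b ∈ Finset.univ, b ∉ Finset.image f Finset.univ →
      Real.negMulLog (pr p (fun ω => f (V ω)) b) = 0 := by
    intro b _ hb
    have : pr p (fun ω => f (V ω)) b = 0 := by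
      unfold pr
      refine Finset.sum_eq_zero fun ω _ => ?_
      rw [if_neg]
      intro h
      exact hb (Finset.mem_image.2 ⟨V ω, Finset.mem_univ _, h⟩)
    simp [this]
  rw [← Finset.sum_subset (Finset.subset_univ (Finset.image f Finset.univ)) h0,
    Finset.sum_image (fun a _ b _ h => hf h)]
  exact Finset.sum_congr rfl fun a _ => by rw [pr_comp_inj p V f hf]

lemma entropy_eq_sum_log {A : Type*} [Fintype A] (X : Ω → A) :
    entropy p X = -∑ a, pr p X a * Real.log (pr p X a) := by
  unfold entropy Real.negMulLog
  simp [Finset.sum_neg_distrib]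

end Helpers

section Helpers2

variable {Ω : Type*} [Fintype Ω] (p : Ω → ℝ)

lemma marg_fst {A B : Type*} [Fintype A] [Fintype B] (U : Ω → A) (V : Ω → B) (a : A) :
    pr p U a = ∑ b, pr p (fun ω => (U ω, V ω)) (a, b) := by
  unfold pr
  rw [Finset.sum_comm]
  refine Finset.sum_congr rfl fun ω _ => ?_
  rw [Finset.sum_eq_single (V ω)]
  · simp [Prod.ext_iff]
  · intro b _ hb
    exact if_neg (fun h => hb (congrArg Prod.snd h).symm)
  · simp

lemma marg_snd {A B : Type*} [Fintype A] [Fintype B] (U : Ω → A) (V : Ω → B) (b : B) :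
    pr p V b = ∑ a, pr p (fun ω => (U ω, V ω)) (a, b) := by
  unfold pr
  rw [Finset.sum_comm]
  refine Finset.sum_congr rfl fun ω _ => ?_
  rw [Finset.sum_eq_single (U ω)]
  · simp [Prod.ext_iff]
  · intro a _ ha
    exact if_neg (fun h => ha (congrArg Prod.fst h).symm)
  · simp

/-- Sum over function space of a product factorizes. -/
lemma sumprod {T : ℕ} {𝒴 : Type*} [Fintype 𝒴] (f : Fin T → 𝒴 → ℝ) :
    ∑ y : Fin T → 𝒴, ∏ s, f s (y s) = ∏ s, ∑ b, f s b := by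
  rw [Finset.prod_univ_sum]
  rw [← Fintype.piFinset_univ]

/-- Sum over function space with a weight at one coordinate. -/
lemma sumcoord {T : ℕ} {𝒳 : Type*} [Fintype 𝒳] (s : Fin T) (φ : 𝒳 → ℝ) (h : Fin T → 𝒳 → ℝ) :
    ∑ x : Fin T → 𝒳, φ (x s) * ∏ s', h s' (x s')
      = (∑ a, φ a * h s a) * ∏ s' ∈ Finset.univ.erase s, (∑ a, h s' a) := by
  set F : Fin T → 𝒳 → ℝ := fun s' a => if s' = s then φ a * h s' a else h s' a with hF
  have key : ∀ x : Fin T → 𝒳, φ (x s) * ∏ s', h s' (x s') = ∏ s', F s' (x s') := by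
    intro x
    rw [← Finset.mul_prod_erase Finset.univ (fun s' => h s' (x s')) (Finset.mem_univ s),
        ← Finset.mul_prod_erase Finset.univ (fun s' => F s' (x s')) (Finset.mem_univ s)]
    have h1 : F s (x s) = φ (x s) * h s (x s) := by simp [hF]
    have h2 : ∀ s' ∈ Finset.univ.erase s, F s' (x s') = h s' (x s') := by
      intro s' hs'; simp [hF, Finset.ne_of_mem_erase hs']
    rw [h1, Finset.prod_congr rfl h2, mul_assoc]
  rw [Finset.sum_congr rfl fun x _ => key x, sumprod F,
      ← Finset.mul_prod_erase Finset.univ (fun s' => ∑ a, F s' a) (Finset.mem_univ s)]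
  have h1 : ∑ a, F s a = ∑ a, φ a * h s a := by simp [hF]
  have h2 : ∀ s' ∈ Finset.univ.erase s, (∑ a, F s' a) = ∑ a, h s' a := by
    intro s' hs'; simp [hF, Finset.ne_of_mem_erase hs']
  rw [h1, Finset.prod_congr rfl h2]

lemma negMulLog_prod {T : ℕ} (a : Fin T → ℝ) :
    Real.negMulLog (∏ s, a s) = ∑ s, (∏ s', a s') * (-Real.log (a s)) := by
  by_cases h : ∏ s, a s = 0
  · simp [h, Real.negMulLog]
  · have hne : ∀ s ∈ Finset.univ, a s ≠ 0 := fun s _ hs =>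
      h (Finset.prod_eq_zero (Finset.mem_univ s) hs)
    rw [Real.negMulLog, Real.log_prod hne, Finset.mul_sum]
    exact Finset.sum_congr rfl fun i _ => by ring

/-- Entropy of a product pmf over a function space. -/
lemma prodneg {T : ℕ} {𝒴 : Type*} [Fintype 𝒴] (f : Fin T → 𝒴 → ℝ)
    (hf1 : ∀ s, ∑ b, f s b = 1) :
    ∑ y : Fin T → 𝒴, Real.negMulLog (∏ s, f s (y s)) = ∑ s, ∑ b, Real.negMulLog (f s b) := by
  have hkey : ∀ y : Fin T → 𝒴, Real.negMulLog (∏ s, f s (y s))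
      = ∑ s, (∏ s', f s' (y s')) * (-Real.log (f s (y s))) := fun y => negMulLog_prod _
  simp only [hkey]
  rw [Finset.sum_comm]
  refine Finset.sum_congr rfl fun s _ => ?_
  have h3 : ∀ y : Fin T → 𝒴, (∏ s', f s' (y s')) * (-Real.log (f s (y s)))
      = (fun c => -Real.log (f s c)) (y s) * ∏ s', f s' (y s') := fun y => by ring
  rw [Finset.sum_congr rfl fun y _ => h3 y, sumcoord s (fun c => -Real.log (f s c)) f]
  have h2 : ∀ s' ∈ Finset.univ.erase s, (∑ a, f s' a) = 1 := fun s' _ => hf1 s'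
  rw [Finset.prod_congr rfl h2, Finset.prod_const_one, mul_one]
  refine Finset.sum_congr rfl fun b _ => ?_
  rw [Real.negMulLog]; ring

end Helpers2

section Helpers3

lemma gibbs {I : Type*} [Fintype I] (P Q : I → ℝ) (hP0 : ∀ i, 0 ≤ P i) (hQ0 : ∀ i, 0 ≤ Q i)
    (hsum : ∑ i, Q i ≤ ∑ i, P i) (hsupp : ∀ i, 0 < P i → 0 < Q i) :
    ∑ i, P i * Real.log (Q i) ≤ ∑ i, P i * Real.log (P i) := by
  have key : ∀ i, P i * Real.log (Q i) - P i * Real.log (P i) ≤ Q i - P i := by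
    intro i
    rcases eq_or_lt_of_le (hP0 i) with h | h
    · simp [← h, hQ0 i]
    · have hq := hsupp i h
      have h2 : Real.log (Q i / P i) ≤ Q i / P i - 1 :=
        Real.log_le_sub_one_of_pos (div_pos hq h)
      have h3 := mul_le_mul_of_nonneg_left h2 (le_of_lt h)
      calc P i * Real.log (Q i) - P i * Real.log (P i)
          = P i * Real.log (Q i / P i) := by rw [Real.log_div hq.ne' h.ne']; ring
        _ ≤ P i * (Q i / P i - 1) := h3
        _ = Q i - P i := by field_simp
  have h4 := Finset.sum_le_sum (fun i (_ : i ∈ Finset.univ) => key i)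
  rw [Finset.sum_sub_distrib, Finset.sum_sub_distrib] at h4
  linarith

variable {Ω : Type*} [Fintype Ω] (p : Ω → ℝ)

lemma condent {A B : Type*} [Fintype A] [Fintype B]
    (Bv : Ω → B) (W : Ω → A) (ρ : A → ℝ) (r : A → B → ℝ)
    (hr1 : ∀ a, ∑ b, r a b = 1)
    (hfac : ∀ b a, pr p (fun ω => (Bv ω, W ω)) (b, a) = ρ a * r a b) :
    entropy p (fun ω => (Bv ω, W ω))
      = entropy p W + ∑ a, ρ a * ∑ b, Real.negMulLog (r a b) := by
  have hW : ∀ a, pr p W a = ρ a := by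
    intro a
    rw [marg_snd p Bv W a]
    simp only [hfac]
    rw [← Finset.mul_sum, hr1, mul_one]
  unfold entropy
  rw [Fintype.sum_prod_type]
  simp only [hfac, Real.negMulLog_mul]
  rw [Finset.sum_comm]
  have h1 : ∀ a, ∑ b, (r a b * Real.negMulLog (ρ a) + ρ a * Real.negMulLog (r a b))
      = Real.negMulLog (ρ a) + ρ a * ∑ b, Real.negMulLog (r a b) := by
    intro a
    rw [Finset.sum_add_distrib, ← Finset.sum_mul, hr1, one_mul, ← Finset.mul_sum]
  rw [Finset.sum_congr rfl fun a _ => h1 a, Finset.sum_add_distrib]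
  congr 1
  exact (Finset.sum_congr rfl fun a _ => by rw [hW]).symm

lemma prodent {A B : Type*} [Fintype A] [Fintype B]
    (U : Ω → A) (V : Ω → B) (g : A → ℝ) (h : B → ℝ)
    (hg1 : ∑ a, g a = 1) (hh1 : ∑ b, h b = 1)
    (hfac : ∀ a b, pr p (fun ω => (U ω, V ω)) (a, b) = g a * h b) :
    entropy p (fun ω => (U ω, V ω)) = entropy p U + entropy p V := by
  have hU : ∀ a, pr p U a = g a := fun a => by
    rw [marg_fst p U V a]; simp only [hfac]; rw [← Finset.mul_sum, hh1, mul_one]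
  rw [condent p U V h (fun _ a => g a) (fun _ => hg1) (fun a b => by rw [hfac]; ring)]
  rw [← Finset.sum_mul, hh1, one_mul]
  have hUe : entropy p U = ∑ a, Real.negMulLog (g a) :=
    Finset.sum_congr rfl fun a _ => by rw [hU]
  rw [hUe]; ring

lemma cmi_chain {A B C D : Type*} [Fintype A] [Fintype B] [Fintype C] [Fintype D]
    (Av : Ω → A) (Bv : Ω → B) (θv : Ω → C) (Cv : Ω → D) :
    condMutualInfo p (fun ω => (Av ω, Bv ω)) θv Cv
      = condMutualInfo p Av θv Cv
        + condMutualInfo p Bv θv (fun ω => (Cv ω, Av ω)) := by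
  have e1 : entropy p (fun ω => (Bv ω, (Cv ω, Av ω)))
      = entropy p (fun ω => ((Av ω, Bv ω), Cv ω)) :=
    entropy_comp_inj p (fun ω => ((Av ω, Bv ω), Cv ω))
      (fun z => (z.1.2, (z.2, z.1.1)))
      (by rintro ⟨⟨a1, b1⟩, c1⟩ ⟨⟨a2, b2⟩, c2⟩ h; simp_all [Prod.ext_iff])
  have e2 : entropy p (fun ω => (θv ω, (Cv ω, Av ω)))
      = entropy p (fun ω => ((Av ω, θv ω), Cv ω)) :=
    entropy_comp_inj p (fun ω => ((Av ω, θv ω), Cv ω))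
      (fun z => (z.1.2, (z.2, z.1.1)))
      (by rintro ⟨⟨a1, b1⟩, c1⟩ ⟨⟨a2, b2⟩, c2⟩ h; simp_all [Prod.ext_iff])
  have e3 : entropy p (fun ω => ((Bv ω, θv ω), (Cv ω, Av ω)))
      = entropy p (fun ω => (((Av ω, Bv ω), θv ω), Cv ω)) :=
    entropy_comp_inj p (fun ω => (((Av ω, Bv ω), θv ω), Cv ω))
      (fun z => ((z.1.1.2, z.1.2), (z.2, z.1.1.1)))
      (by rintro ⟨⟨⟨a1, b1⟩, t1⟩, c1⟩ ⟨⟨⟨a2, b2⟩, t2⟩, c2⟩ h; simp_all [Prod.ext_iff])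
  have e4 : entropy p (fun ω => (Cv ω, Av ω)) = entropy p (fun ω => (Av ω, Cv ω)) :=
    entropy_comp_inj p (fun ω => (Av ω, Cv ω)) (fun z => (z.2, z.1))
      (by rintro ⟨a1, c1⟩ ⟨a2, c2⟩ h; simp_all [Prod.ext_iff])
  simp only [condMutualInfo]
  linarith

end Helpers3

section Subadd

lemma subadd {Ω W' 𝒴 V' : Type*} [Fintype Ω] [Fintype W'] [Fintype 𝒴] [Fintype V'] {T : ℕ}
    (p : Ω → ℝ) (hp0 : ∀ ω, 0 ≤ p ω) (hp1 : ∑ ω, p ω = 1)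
    (Y : Fin T → Ω → 𝒴) (W : Ω → W') (g : Fin T → W' → V') :
    entropy p (fun ω => ((fun s => Y s ω), W ω)) - entropy p W
      ≤ ∑ s, (entropy p (fun ω => (Y s ω, g s (W ω)))
          - entropy p (fun ω => g s (W ω))) := by
  classical
  set Pf : Ω → (Fin T → 𝒴) × W' := fun ω => ((fun s => Y s ω), W ω) with hPf
  set P : (Fin T → 𝒴) × W' → ℝ := pr p Pf with hP
  set prW : W' → ℝ := pr p W with hprW
  set prV : Fin T → V' → ℝ := fun s => pr p (fun ω => g s (W ω)) with hprV
  set prJ : Fin T → 𝒴 × V' → ℝ := fun s => pr p (fun ω => (Y s ω, g s (W ω))) with hprJ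
  set Q : (Fin T → 𝒴) × W' → ℝ := fun z =>
    if prW z.2 = 0 then 0
    else prW z.2 * ∏ s, (prJ s (z.1 s, g s z.2) / prV s (g s z.2)) with hQ
  -- basic facts
  have fW : ∀ z, P z ≤ prW z.2 := fun z => pr_le_comp p hp0 Pf Prod.snd z
  have fJ : ∀ z (s : Fin T), P z ≤ prJ s (z.1 s, g s z.2) := fun z s =>
    pr_le_comp p hp0 Pf (fun w => (w.1 s, g s w.2)) z
  have fV : ∀ (w : W') (s : Fin T), prW w ≤ prV s (g s w) := fun w s =>
    pr_le_comp p hp0 W (g s) w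
  have fVJ : ∀ (s : Fin T) (v : V'), prV s v = ∑ b, prJ s (b, v) := fun s v =>
    marg_snd p (Y s) (fun ω => g s (W ω)) v
  have hP0 : ∀ z, 0 ≤ P z := fun z => pr_nonneg p hp0 _ z
  have hprW0 : ∀ w, 0 ≤ prW w := fun w => pr_nonneg p hp0 _ w
  have hprV0 : ∀ s v, 0 ≤ prV s v := fun s v => pr_nonneg p hp0 _ v
  have hprJ0 : ∀ s bv, 0 ≤ prJ s bv := fun s bv => pr_nonneg p hp0 _ bv
  have hQ0 : ∀ z, 0 ≤ Q z := by
    intro z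
    rw [hQ]
    dsimp only
    split
    · exact le_refl 0
    · exact mul_nonneg (hprW0 z.2) (Finset.prod_nonneg fun s _ =>
        div_nonneg (hprJ0 s _) (hprV0 s _))
  have hsum : ∑ z, Q z ≤ ∑ z, P z := by
    rw [sum_pr p hp1 Pf]
    have hw : ∀ w : W', ∑ y : Fin T → 𝒴, Q (y, w) ≤ prW w := by
      intro w
      by_cases h0 : prW w = 0
      · simp [hQ, h0, hprW0 w]
      · have hVpos : ∀ s : Fin T, 0 < prV s (g s w) :=
          fun s => lt_of_lt_of_le (lt_of_le_of_ne (hprW0 w) (Ne.symm h0)) (fV w s)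
        have : ∀ y : Fin T → 𝒴, Q (y, w)
            = prW w * ∏ s, (fun s b => prJ s (b, g s w) / prV s (g s w)) s (y s) := by
          intro y; rw [hQ]; simp only [if_neg h0]
        rw [Finset.sum_congr rfl fun y _ => this y, ← Finset.mul_sum,
          sumprod (fun s b => prJ s (b, g s w) / prV s (g s w))]
        have : ∀ s : Fin T, (∑ b, prJ s (b, g s w) / prV s (g s w)) = 1 := by
          intro s
          rw [← Finset.sum_div, ← fVJ s (g s w), div_self (hVpos s).ne']
        rw [Finset.prod_congr rfl fun s _ => this s, Finset.prod_const_one, mul_one]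
    calc ∑ z, Q z = ∑ w, ∑ y : Fin T → 𝒴, Q (y, w) := by
          rw [Fintype.sum_prod_type, Finset.sum_comm]
      _ ≤ ∑ w, prW w := Finset.sum_le_sum fun w _ => hw w
      _ = 1 := sum_pr p hp1 W
  have hsupp : ∀ z, 0 < P z → 0 < Q z := by
    intro z hz
    have hWpos : 0 < prW z.2 := lt_of_lt_of_le hz (fW z)
    rw [hQ]
    dsimp only
    rw [if_neg hWpos.ne']
    exact mul_pos hWpos (Finset.prod_pos fun s _ =>
      div_pos (lt_of_lt_of_le hz (fJ z s)) (lt_of_lt_of_le hWpos (fV z.2 s)))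
  have hgibbs := gibbs P Q hP0 hQ0 hsum hsupp
  -- rewrite RHS of gibbs
  have exp2 : ∑ z, P z * Real.log (P z) = -entropy p Pf := by
    rw [entropy_eq_sum_log, neg_neg]
  -- pointwise expansion of log Q
  have key : ∀ z, P z * Real.log (Q z)
      = P z * Real.log (prW z.2)
        + ∑ s, (P z * Real.log (prJ s (z.1 s, g s z.2))
          - P z * Real.log (prV s (g s z.2))) := by
    intro z
    rcases eq_or_lt_of_le (hP0 z) with h | h
    · simp [← h]
    · have hWpos : 0 < prW z.2 := lt_of_lt_of_le h (fW z)
      have hVpos : ∀ s : Fin T, 0 < prV s (g s z.2) :=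
        fun s => lt_of_lt_of_le hWpos (fV z.2 s)
      have hJpos : ∀ s : Fin T, 0 < prJ s (z.1 s, g s z.2) :=
        fun s => lt_of_lt_of_le h (fJ z s)
      have hQval : Q z = prW z.2 * ∏ s, (prJ s (z.1 s, g s z.2) / prV s (g s z.2)) := by
        rw [hQ]; dsimp only; rw [if_neg hWpos.ne']
      have hprodpos : 0 < ∏ s, (prJ s (z.1 s, g s z.2) / prV s (g s z.2)) :=
        Finset.prod_pos fun s _ => div_pos (hJpos s) (hVpos s)
      rw [hQval, Real.log_mul hWpos.ne' hprodpos.ne',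
        Real.log_prod (fun s _ => (div_pos (hJpos s) (hVpos s)).ne')]
      rw [Finset.sum_congr rfl fun s (_ : s ∈ Finset.univ) =>
        Real.log_div (hJpos s).ne' (hVpos s).ne']
      rw [mul_add, Finset.mul_sum]
      congr 1
      exact Finset.sum_congr rfl fun s _ => by ring
  rw [Finset.sum_congr rfl fun z _ => key z, Finset.sum_add_distrib] at hgibbs
  rw [Finset.sum_comm] at hgibbs
  -- identify the marginal sums via lotus
  have t0 : ∑ z, P z * Real.log (prW z.2) = ∑ w, prW w * Real.log (prW w) :=
    (lotus p Pf Prod.snd (fun w => Real.log (prW w))).symm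
  have tJ : ∀ s : Fin T, ∑ z, P z * Real.log (prJ s (z.1 s, g s z.2))
      = ∑ bv, prJ s bv * Real.log (prJ s bv) :=
    fun s => (lotus p Pf (fun w => (w.1 s, g s w.2)) (fun bv => Real.log (prJ s bv))).symm
  have tV : ∀ s : Fin T, ∑ z, P z * Real.log (prV s (g s z.2))
      = ∑ v, prV s v * Real.log (prV s v) :=
    fun s => (lotus p Pf (fun w => g s w.2) (fun v => Real.log (prV s v))).symm
  have sredist : ∀ s : Fin T,
      ∑ z, (P z * Real.log (prJ s (z.1 s, g s z.2)) - P z * Real.log (prV s (g s z.2)))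
      = -(entropy p (fun ω => (Y s ω, g s (W ω))) - entropy p (fun ω => g s (W ω))) := by
    intro s
    rw [Finset.sum_sub_distrib, tJ s, tV s, entropy_eq_sum_log, entropy_eq_sum_log]
    ring
  rw [Finset.sum_congr rfl fun s _ => sredist s, t0, exp2] at hgibbs
  have t0' : ∑ w, prW w * Real.log (prW w) = -entropy p W := by
    rw [entropy_eq_sum_log, neg_neg]
  rw [t0', Finset.sum_neg_distrib] at hgibbs
  linarith

end Subadd

section Marginals

lemma sumind {T : ℕ} {𝒳 : Type*} [Fintype 𝒳] (s : Fin T) (a : 𝒳) (ψ : 𝒳 → ℝ)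
    (h : Fin T → 𝒳 → ℝ) (h1 : ∀ s', s' ≠ s → ∑ c, h s' c = 1) :
    ∑ x : Fin T → 𝒳, (if x s = a then ψ (x s) else 0) * ∏ s', h s' (x s')
      = ψ a * h s a := by
  rw [sumcoord s (fun c => if c = a then ψ c else 0) h]
  have h2 : ∀ s' ∈ Finset.univ.erase s, (∑ c, h s' c) = 1 :=
    fun s' hs' => h1 s' (Finset.ne_of_mem_erase hs')
  rw [Finset.prod_congr rfl h2, Finset.prod_const_one, mul_one]
  simp

variable {Ω Θ Θ' 𝒳 𝒴 : Type*} [Fintype Ω] [Fintype Θ] [Fintype Θ'] [Fintype 𝒳] [Fintype 𝒴]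
  {T : ℕ} (π : Θ → ℝ) (lam : Θ → Θ' → ℝ) (μ : 𝒳 → ℝ) (k : 𝒴 → Θ → 𝒳 → ℝ)
  (p : Ω → ℝ) (θ : Ω → Θ) (θt : Ω → Θ') (X : Fin T → Ω → 𝒳) (Y : Fin T → Ω → 𝒴)

lemma marginal_M
    (hμ1 : ∑ a, μ a = 1) (hk1 : ∀ ν a, ∑ b, k b ν a = 1)
    (hjoint : ∀ ν τ x y,
      pr p (fun ω => (θ ω, θt ω, fun s => X s ω, fun s => Y s ω)) (ν, τ, x, y)
        = π ν * lam ν τ * ∏ s : Fin T, μ (x s) * k (y s) ν (x s))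
    (s : Fin T) (ν : Θ) (τ : Θ') (a : 𝒳) (b : 𝒴) :
    pr p (fun ω => (θ ω, θt ω, X s ω, Y s ω)) (ν, τ, a, b)
      = π ν * lam ν τ * (μ a * k b ν a) := by
  classical
  have h := pr_comp p (fun ω => (θ ω, θt ω, fun s => X s ω, fun s => Y s ω))
    (fun z => (z.1, z.2.1, z.2.2.1 s, z.2.2.2 s)) (ν, τ, a, b)
  rw [show (fun ω => (θ ω, θt ω, X s ω, Y s ω))
      = (fun ω => ((fun z : Θ × Θ' × (Fin T → 𝒳) × (Fin T → 𝒴) =>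
          (z.1, z.2.1, z.2.2.1 s, z.2.2.2 s)) ((θ ω, θt ω, fun s => X s ω, fun s => Y s ω))))
      from rfl, h]
  simp only [hjoint, Fintype.sum_prod_type, Prod.mk.injEq, ite_and]
  rw [Finset.sum_eq_single ν]
  rotate_left
  · intro ν' _ hne; simp [hne]
  · simp
  simp only [eq_self_iff_true, if_true]
  rw [Finset.sum_eq_single τ]
  rotate_left
  · intro τ' _ hne; simp [hne]
  · simp
  simp only [eq_self_iff_true, if_true]
  -- now : ∑ x, ∑ y, (if x s = a then if y s = b then π ν * lam ν τ * ∏ ... else 0 else 0)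
  have hy : ∀ x : Fin T → 𝒳,
      (∑ y : Fin T → 𝒴, if x s = a then
        if y s = b then π ν * lam ν τ * ∏ s' : Fin T, μ (x s') * k (y s') ν (x s') else 0
      else 0)
      = if x s = a then (π ν * lam ν τ * ∏ s', μ (x s')) * k b ν (x s) else 0 := by
    intro x
    split
    · have hpt : ∀ y : Fin T → 𝒴,
          (if y s = b then π ν * lam ν τ * ∏ s' : Fin T, μ (x s') * k (y s') ν (x s') else 0)
          = (if y s = b then (fun _ : 𝒴 => π ν * lam ν τ * ∏ s', μ (x s')) (y s) else 0)
            * ∏ s', k (y s') ν (x s') := by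
        intro y
        rw [Finset.prod_mul_distrib]
        split <;> ring
      rw [Finset.sum_congr rfl fun y _ => hpt y,
        sumind s b (fun _ : 𝒴 => π ν * lam ν τ * ∏ s', μ (x s'))
          (fun s' c => k c ν (x s')) (fun s' _ => hk1 ν (x s'))]
    · simp
  rw [Finset.sum_congr rfl fun x _ => hy x]
  have hpt2 : ∀ x : Fin T → 𝒳,
      (if x s = a then (π ν * lam ν τ * ∏ s', μ (x s')) * k b ν (x s) else 0)
      = π ν * lam ν τ * ((if x s = a then (fun c => k b ν c) (x s) else 0) * ∏ s', μ (x s')) := by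
    intro x; split <;> ring
  rw [Finset.sum_congr rfl fun x _ => hpt2 x, ← Finset.mul_sum,
    sumind s a (fun c => k b ν c) (fun _ => μ) (fun _ _ => hμ1)]
  ring

end Marginals

section Marginals2

variable {Ω Θ Θ' 𝒳 𝒴 : Type*} [Fintype Ω] [Fintype Θ] [Fintype Θ'] [Fintype 𝒳] [Fintype 𝒴]
  {T : ℕ} (π : Θ → ℝ) (lam : Θ → Θ' → ℝ) (μ : 𝒳 → ℝ) (k : 𝒴 → Θ → 𝒳 → ℝ)
  (p : Ω → ℝ) (θ : Ω → Θ) (θt : Ω → Θ') (X : Fin T → Ω → 𝒳) (Y : Fin T → Ω → 𝒴)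

lemma marg_d6
    (hjoint : ∀ ν τ x y,
      pr p (fun ω => (θ ω, θt ω, fun s => X s ω, fun s => Y s ω)) (ν, τ, x, y)
        = π ν * lam ν τ * ∏ s : Fin T, μ (x s) * k (y s) ν (x s))
    (y : Fin T → 𝒴) (ν : Θ) (τ : Θ') (x : Fin T → 𝒳) :
    pr p (fun ω => ((fun s => Y s ω), (θ ω, θt ω, fun s => X s ω))) (y, (ν, τ, x))
      = (π ν * lam ν τ * ∏ s, μ (x s)) * ∏ s, k (y s) ν (x s) := by
  have hinj : Function.Injective (fun z : Θ × Θ' × (Fin T → 𝒳) × (Fin T → 𝒴) =>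
      (z.2.2.2, (z.1, z.2.1, z.2.2.1))) := by
    rintro ⟨a1, b1, c1, d1⟩ ⟨a2, b2, c2, d2⟩ h; simp_all [Prod.ext_iff]
  have hre : pr p (fun ω => ((fun s => Y s ω), (θ ω, θt ω, fun s => X s ω))) (y, (ν, τ, x))
      = pr p (fun ω => (θ ω, θt ω, fun s => X s ω, fun s => Y s ω)) (ν, τ, x, y) :=
    pr_comp_inj p (fun ω => (θ ω, θt ω, fun s => X s ω, fun s => Y s ω))
      (fun z => (z.2.2.2, (z.1, z.2.1, z.2.2.1))) hinj (ν, τ, x, y)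
  rw [hre, hjoint, Finset.prod_mul_distrib]
  ring

lemma marg_d5
    (hμ1 : ∑ a, μ a = 1) (hk1 : ∀ ν a, ∑ b, k b ν a = 1)
    (hjoint : ∀ ν τ x y,
      pr p (fun ω => (θ ω, θt ω, fun s => X s ω, fun s => Y s ω)) (ν, τ, x, y)
        = π ν * lam ν τ * ∏ s : Fin T, μ (x s) * k (y s) ν (x s))
    (i0 : Fin T) (b : 𝒴) (ν : Θ) (τ : Θ') (a : 𝒳) :
    pr p (fun ω => (Y i0 ω, (θ ω, θt ω, X i0 ω))) (b, (ν, τ, a))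
      = (π ν * lam ν τ * μ a) * k b ν a := by
  have hinj : Function.Injective (fun z : Θ × Θ' × 𝒳 × 𝒴 =>
      (z.2.2.2, (z.1, z.2.1, z.2.2.1))) := by
    rintro ⟨a1, b1, c1, d1⟩ ⟨a2, b2, c2, d2⟩ h; simp_all [Prod.ext_iff]
  have hre : pr p (fun ω => (Y i0 ω, (θ ω, θt ω, X i0 ω))) (b, (ν, τ, a))
      = pr p (fun ω => (θ ω, θt ω, X i0 ω, Y i0 ω)) (ν, τ, a, b) :=
    pr_comp_inj p (fun ω => (θ ω, θt ω, X i0 ω, Y i0 ω))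
      (fun z => (z.2.2.2, (z.1, z.2.1, z.2.2.1))) hinj (ν, τ, a, b)
  rw [hre, marginal_M π lam μ k p θ θt X Y hμ1 hk1 hjoint i0 ν τ a b]
  ring

lemma marg_d1
    (hμ1 : ∑ a, μ a = 1) (hk1 : ∀ ν a, ∑ b, k b ν a = 1)
    (hjoint : ∀ ν τ x y,
      pr p (fun ω => (θ ω, θt ω, fun s => X s ω, fun s => Y s ω)) (ν, τ, x, y)
        = π ν * lam ν τ * ∏ s : Fin T, μ (x s) * k (y s) ν (x s))
    (s : Fin T) (b : 𝒴) (τ : Θ') (a : 𝒳) :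
    pr p (fun ω => (Y s ω, (θt ω, X s ω))) (b, (τ, a))
      = ∑ ν, π ν * lam ν τ * (μ a * k b ν a) := by
  rw [show (fun ω => (Y s ω, (θt ω, X s ω)))
      = (fun ω => ((fun z : Θ × Θ' × 𝒳 × 𝒴 => (z.2.2.2, (z.2.1, z.2.2.1)))
          ((θ ω, θt ω, X s ω, Y s ω)))) from rfl,
    pr_comp p (fun ω => (θ ω, θt ω, X s ω, Y s ω))
      (fun z => (z.2.2.2, (z.2.1, z.2.2.1))) (b, (τ, a))]
  simp only [Fintype.sum_prod_type, Prod.mk.injEq, ite_and,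
    marginal_M π lam μ k p θ θt X Y hμ1 hk1 hjoint s]
  simp [Finset.sum_ite_eq, Finset.sum_ite_eq']

lemma marg_d2
    (hμ1 : ∑ a, μ a = 1) (hk1 : ∀ ν a, ∑ b, k b ν a = 1)
    (hjoint : ∀ ν τ x y,
      pr p (fun ω => (θ ω, θt ω, fun s => X s ω, fun s => Y s ω)) (ν, τ, x, y)
        = π ν * lam ν τ * ∏ s : Fin T, μ (x s) * k (y s) ν (x s))
    (s : Fin T) (τ : Θ') (a : 𝒳) :
    pr p (fun ω => (θt ω, X s ω)) (τ, a) = (∑ ν, π ν * lam ν τ) * μ a := by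
  rw [marg_snd p (Y s) (fun ω => (θt ω, X s ω)) (τ, a)]
  simp only [marg_d1 π lam μ k p θ θt X Y hμ1 hk1 hjoint s]
  rw [Finset.sum_comm]
  have h1 : ∀ ν, ∑ b, π ν * lam ν τ * (μ a * k b ν a) = π ν * lam ν τ * μ a := by
    intro ν
    rw [Finset.sum_congr rfl fun b (_ : b ∈ Finset.univ) =>
      show π ν * lam ν τ * (μ a * k b ν a) = (π ν * lam ν τ * μ a) * k b ν a by ring,
      ← Finset.mul_sum, hk1 ν a, mul_one]
  rw [Finset.sum_congr rfl fun ν _ => h1 ν, Finset.sum_mul]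

lemma marg_d3
    (hk1 : ∀ ν a, ∑ b, k b ν a = 1)
    (hjoint : ∀ ν τ x y,
      pr p (fun ω => (θ ω, θt ω, fun s => X s ω, fun s => Y s ω)) (ν, τ, x, y)
        = π ν * lam ν τ * ∏ s : Fin T, μ (x s) * k (y s) ν (x s))
    (x : Fin T → 𝒳) (ν : Θ) (τ : Θ') :
    pr p (fun ω => ((fun s => X s ω), (θ ω, θt ω))) (x, (ν, τ))
      = (∏ s, μ (x s)) * (π ν * lam ν τ) := by
  rw [show (fun ω => ((fun s => X s ω), (θ ω, θt ω)))
      = (fun ω => ((fun z : Θ × Θ' × (Fin T → 𝒳) × (Fin T → 𝒴) => (z.2.2.1, (z.1, z.2.1)))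
          ((θ ω, θt ω, fun s => X s ω, fun s => Y s ω)))) from rfl,
    pr_comp p (fun ω => (θ ω, θt ω, fun s => X s ω, fun s => Y s ω))
      (fun z => (z.2.2.1, (z.1, z.2.1))) (x, (ν, τ))]
  simp only [hjoint, Fintype.sum_prod_type, Prod.mk.injEq, ite_and]
  rw [Finset.sum_eq_single ν]
  rotate_left
  · intro ν' _ hne; simp [hne]
  · simp
  simp only [eq_self_iff_true, if_true]
  rw [Finset.sum_eq_single τ]
  rotate_left
  · intro τ' _ hne; simp [hne]
  · simp
  simp only [eq_self_iff_true, if_true]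
  have hx : ∀ x' : Fin T → 𝒳, (∑ y : Fin T → 𝒴, if x' = x
      then π ν * lam ν τ * ∏ s' : Fin T, μ (x' s') * k (y s') ν (x' s') else 0)
      = if x' = x
        then ∑ y : Fin T → 𝒴, π ν * lam ν τ * ∏ s' : Fin T, μ (x s') * k (y s') ν (x s')
        else 0 := by
    intro x'
    by_cases h : x' = x
    · subst h; simp
    · simp [h]
  rw [Finset.sum_congr rfl fun x' _ => hx x', Finset.sum_ite_eq' Finset.univ x]
  simp only [Finset.mem_univ, if_true]
  have hy : ∑ y : Fin T → 𝒴, π ν * lam ν τ * ∏ s' : Fin T, μ (x s') * k (y s') ν (x s')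
      = π ν * lam ν τ * ((∏ s, μ (x s))
          * ∑ y : Fin T → 𝒴, ∏ s', (fun s' c => k c ν (x s')) s' (y s')) := by
    rw [Finset.mul_sum, Finset.mul_sum]
    refine Finset.sum_congr rfl fun y _ => ?_
    rw [Finset.prod_mul_distrib]
    try ring
  rw [hy, sumprod (fun s' c => k c ν (x s')),
    Finset.prod_congr rfl (fun s' (_ : s' ∈ Finset.univ) => hk1 ν (x s')),
    Finset.prod_const_one, mul_one]
  ring

lemma marg_d4
    (hk1 : ∀ ν a, ∑ b, k b ν a = 1)
    (hjoint : ∀ ν τ x y,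
      pr p (fun ω => (θ ω, θt ω, fun s => X s ω, fun s => Y s ω)) (ν, τ, x, y)
        = π ν * lam ν τ * ∏ s : Fin T, μ (x s) * k (y s) ν (x s))
    (x : Fin T → 𝒳) (τ : Θ') :
    pr p (fun ω => ((fun s => X s ω), θt ω)) (x, τ)
      = (∏ s, μ (x s)) * (∑ ν, π ν * lam ν τ) := by
  rw [show (fun ω => ((fun s => X s ω), θt ω))
      = (fun ω => ((fun z : (Fin T → 𝒳) × (Θ × Θ') => (z.1, z.2.2))
          (((fun s => X s ω), (θ ω, θt ω))))) from rfl,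
    pr_comp p (fun ω => ((fun s => X s ω), (θ ω, θt ω))) (fun z => (z.1, z.2.2)) (x, τ)]
  simp only [Fintype.sum_prod_type, Prod.mk.injEq, ite_and]
  rw [Finset.sum_eq_single x]
  rotate_left
  · intro x' _ hne; simp [hne]
  · simp
  simp only [eq_self_iff_true, if_true]
  have hτ : ∀ ν' : Θ, (∑ τ' : Θ', if τ' = τ
      then pr p (fun ω => ((fun s => X s ω), (θ ω, θt ω))) (x, (ν', τ')) else 0)
      = pr p (fun ω => ((fun s => X s ω), (θ ω, θt ω))) (x, (ν', τ)) := by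
    intro ν'
    rw [Finset.sum_eq_single τ]
    · simp
    · intro τ' _ hne; simp [hne]
    · simp
  rw [Finset.sum_congr rfl fun ν' _ => hτ ν']
  simp only [marg_d3 π lam μ k p θ θt X Y hk1 hjoint x]
  rw [Finset.mul_sum]

end Marginals2

section CSums

variable {Θ Θ' 𝒳 𝒴 : Type*} [Fintype Θ] [Fintype Θ'] [Fintype 𝒳] [Fintype 𝒴]
  {T : ℕ} (π : Θ → ℝ) (lam : Θ → Θ' → ℝ) (μ : 𝒳 → ℝ) (k : 𝒴 → Θ → 𝒳 → ℝ)

lemma csum_single (hlam1 : ∀ ν, ∑ τ, lam ν τ = 1) :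
    ∑ w : Θ × Θ' × 𝒳, (π w.1 * lam w.1 w.2.1 * μ w.2.2) * (∑ b, Real.negMulLog (k b w.1 w.2.2))
      = ∑ ν, ∑ a, π ν * μ a * ∑ b, Real.negMulLog (k b ν a) := by
  rw [Fintype.sum_prod_type]
  refine Finset.sum_congr rfl fun ν _ => ?_
  rw [Fintype.sum_prod_type]
  have h1 : ∀ τ, ∑ a, (π ν * lam ν τ * μ a) * (∑ b, Real.negMulLog (k b ν a))
      = lam ν τ * ∑ a, π ν * μ a * ∑ b, Real.negMulLog (k b ν a) := by
    intro τ
    rw [Finset.mul_sum]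
    exact Finset.sum_congr rfl fun a _ => by ring
  rw [Finset.sum_congr rfl fun τ _ => h1 τ, ← Finset.sum_mul, hlam1, one_mul]

lemma csum_full (hμ1 : ∑ a, μ a = 1) (hlam1 : ∀ ν, ∑ τ, lam ν τ = 1)
    (hk1 : ∀ ν a, ∑ b, k b ν a = 1) :
    ∑ w : Θ × Θ' × (Fin T → 𝒳), (π w.1 * lam w.1 w.2.1 * ∏ s, μ (w.2.2 s))
        * (∑ y : Fin T → 𝒴, Real.negMulLog (∏ s, k (y s) w.1 (w.2.2 s)))
      = (T : ℝ) * ∑ ν, ∑ a, π ν * μ a * ∑ b, Real.negMulLog (k b ν a) := by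
  rw [Fintype.sum_prod_type]
  have hν : ∀ ν : Θ, ∑ w : Θ' × (Fin T → 𝒳), (π ν * lam ν w.1 * ∏ s, μ (w.2 s))
        * (∑ y : Fin T → 𝒴, Real.negMulLog (∏ s, k (y s) ν (w.2 s)))
      = (T : ℝ) * ∑ a, π ν * μ a * ∑ b, Real.negMulLog (k b ν a) := by
    intro ν
    rw [Fintype.sum_prod_type]
    have hτ : ∀ τ : Θ', ∑ x : Fin T → 𝒳, (π ν * lam ν τ * ∏ s, μ (x s))
          * (∑ y : Fin T → 𝒴, Real.negMulLog (∏ s, k (y s) ν (x s)))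
        = lam ν τ * ((T : ℝ) * ∑ a, π ν * μ a * ∑ b, Real.negMulLog (k b ν a)) := by
      intro τ
      have hinner : ∀ x : Fin T → 𝒳,
          (∑ y : Fin T → 𝒴, Real.negMulLog (∏ s, k (y s) ν (x s)))
          = ∑ s, ∑ b, Real.negMulLog (k b ν (x s)) :=
        fun x => prodneg (fun s b => k b ν (x s)) (fun s => hk1 ν (x s))
      rw [Finset.sum_congr rfl fun x _ => by rw [hinner x]]
      have hswap : ∀ x : Fin T → 𝒳, (π ν * lam ν τ * ∏ s, μ (x s))
            * ∑ s, ∑ b, Real.negMulLog (k b ν (x s))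
          = ∑ s, (π ν * lam ν τ) * ((fun a => ∑ b, Real.negMulLog (k b ν a)) (x s)
              * ∏ s', (fun _ : Fin T => μ) s' (x s')) := by
        intro x
        rw [Finset.mul_sum]
        exact Finset.sum_congr rfl fun s _ => by ring
      rw [Finset.sum_congr rfl fun x _ => hswap x, Finset.sum_comm]
      have hs : ∀ s : Fin T, ∑ x : Fin T → 𝒳,
          (π ν * lam ν τ) * ((fun a => ∑ b, Real.negMulLog (k b ν a)) (x s)
            * ∏ s', (fun _ : Fin T => μ) s' (x s'))
          = (π ν * lam ν τ) * ∑ a, (∑ b, Real.negMulLog (k b ν a)) * μ a := by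
        intro s
        rw [← Finset.mul_sum,
          sumcoord s (fun a => ∑ b, Real.negMulLog (k b ν a)) (fun _ => μ)]
        rw [Finset.prod_congr rfl (fun s' (_ : s' ∈ Finset.univ.erase s) => hμ1),
          Finset.prod_const_one, mul_one]
      rw [Finset.sum_congr rfl fun s _ => hs s, Finset.sum_const, Finset.card_univ,
        Fintype.card_fin, nsmul_eq_mul]
      simp only [Finset.mul_sum]
      refine Finset.sum_congr rfl fun a _ => ?_
      simp only [Finset.mul_sum, Finset.sum_mul]
      exact Finset.sum_congr rfl fun b _ => by ring
    rw [Finset.sum_congr rfl fun τ _ => hτ τ, ← Finset.sum_mul, hlam1, one_mul]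
  rw [Finset.sum_congr rfl fun ν _ => hν ν, ← Finset.mul_sum]

end CSums

/-- average distortion is bounded by single-sample distortion. -/
theorem statement8 {Ω Θ Θ' 𝒳 𝒴 : Type*}
    [Fintype Ω] [Fintype Θ] [Fintype Θ'] [Fintype 𝒳] [Fintype 𝒴]
    (T : ℕ) (hT : 1 ≤ T)
    (π : Θ → ℝ) (hπ : (∀ ν, 0 ≤ π ν) ∧ ∑ ν, π ν = 1)
    (lam : Θ → Θ' → ℝ) (hlam : ∀ ν, (∀ τ, 0 ≤ lam ν τ) ∧ ∑ τ, lam ν τ = 1)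
    (μ : 𝒳 → ℝ) (hμ : (∀ a, 0 ≤ μ a) ∧ ∑ a, μ a = 1)
    (k : 𝒴 → Θ → 𝒳 → ℝ) (hk : ∀ ν a, (∀ b, 0 ≤ k b ν a) ∧ ∑ b, k b ν a = 1)
    (p : Ω → ℝ) (hp0 : ∀ ω, 0 ≤ p ω) (hp1 : ∑ ω, p ω = 1)
    (θ : Ω → Θ) (θt : Ω → Θ') (X : Fin T → Ω → 𝒳) (Y : Fin T → Ω → 𝒴)
    (hjoint : ∀ (ν : Θ) (τ : Θ') (x : Fin T → 𝒳) (y : Fin T → 𝒴),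
      pr p (fun ω => (θ ω, θt ω, fun s => X s ω, fun s => Y s ω)) (ν, τ, x, y)
        = π ν * lam ν τ * ∏ s : Fin T, μ (x s) * k (y s) ν (x s)) :
    condMutualInfo p (fun ω => ((fun s : Fin T => X s ω), (fun s : Fin T => Y s ω))) θ θt
        / (T : ℝ)
      ≤ condMutualInfo p (Y ⟨0, by omega⟩) θ (fun ω => (θt ω, X ⟨0, by omega⟩ ω)) := by
  classical
  obtain ⟨hπ0, hπ1⟩ := hπ
  obtain ⟨hμ0, hμ1⟩ := hμ
  have hlam1 : ∀ ν, ∑ τ, lam ν τ = 1 := fun ν => (hlam ν).2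
  have hk1 : ∀ ν a, ∑ b, k b ν a = 1 := fun ν a => (hk ν a).2
  have hT0 : 0 < T := by omega
  set i0 : Fin T := ⟨0, hT0⟩ with hi0def
  show condMutualInfo p (fun ω => ((fun s : Fin T => X s ω), (fun s : Fin T => Y s ω))) θ θt
        / (T : ℝ)
      ≤ condMutualInfo p (Y i0) θ (fun ω => (θt ω, X i0 ω))
  set c : ℝ := ∑ ν, ∑ a, π ν * μ a * ∑ b, Real.negMulLog (k b ν a) with hcdef
  -- chain rule
  have hchain : condMutualInfo p
        (fun ω => ((fun s : Fin T => X s ω), (fun s : Fin T => Y s ω))) θ θt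
      = condMutualInfo p (fun ω => (fun s : Fin T => X s ω)) θ θt
        + condMutualInfo p (fun ω => (fun s : Fin T => Y s ω)) θ
            (fun ω => (θt ω, (fun s : Fin T => X s ω))) :=
    cmi_chain p (fun ω => (fun s : Fin T => X s ω)) (fun ω => (fun s : Fin T => Y s ω)) θ θt
  -- the X part vanishes
  have hzero : condMutualInfo p (fun ω => (fun s : Fin T => X s ω)) θ θt = 0 := by
    have hsum1 : ∑ x : Fin T → 𝒳, ∏ s, μ (x s) = 1 := by
      rw [sumprod (fun _ : Fin T => μ), Finset.prod_congr rfl fun _ _ => hμ1,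
        Finset.prod_const_one]
    have hsum2 : ∑ z : Θ × Θ', π z.1 * lam z.1 z.2 = 1 := by
      rw [Fintype.sum_prod_type]
      have hν : ∀ ν, ∑ τ, π ν * lam ν τ = π ν := by
        intro ν; rw [← Finset.mul_sum, hlam1 ν, mul_one]
      rw [Finset.sum_congr rfl fun ν _ => hν ν, hπ1]
    have z1 : entropy p (fun ω => ((fun s : Fin T => X s ω), θt ω))
        = entropy p (fun ω => (fun s : Fin T => X s ω)) + entropy p θt :=
      prodent p (fun ω => (fun s : Fin T => X s ω)) θt
        (fun x => ∏ s, μ (x s)) (fun τ => ∑ ν, π ν * lam ν τ) hsum1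
        (by
          rw [Finset.sum_comm]
          have hν : ∀ ν, ∑ τ, π ν * lam ν τ = π ν := fun ν => by
            rw [← Finset.mul_sum, hlam1 ν, mul_one]
          rw [Finset.sum_congr rfl fun ν _ => hν ν, hπ1])
        (fun x τ => marg_d4 π lam μ k p θ θt X Y hk1 hjoint x τ)
    have z2 : entropy p (fun ω => ((fun s : Fin T => X s ω), (θ ω, θt ω)))
        = entropy p (fun ω => (fun s : Fin T => X s ω))
          + entropy p (fun ω => (θ ω, θt ω)) :=
      prodent p (fun ω => (fun s : Fin T => X s ω)) (fun ω => (θ ω, θt ω))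
        (fun x => ∏ s, μ (x s)) (fun z => π z.1 * lam z.1 z.2) hsum1 hsum2
        (fun x z => by
          obtain ⟨ν, τ⟩ := z
          exact marg_d3 π lam μ k p θ θt X Y hk1 hjoint x ν τ)
    have z3 : entropy p (fun ω => (((fun s : Fin T => X s ω), θ ω), θt ω))
        = entropy p (fun ω => ((fun s : Fin T => X s ω), (θ ω, θt ω))) :=
      (entropy_comp_inj p (fun ω => (((fun s : Fin T => X s ω), θ ω), θt ω))
        (fun z => (z.1.1, (z.1.2, z.2)))
        (by rintro ⟨⟨x1, n1⟩, t1⟩ ⟨⟨x2, n2⟩, t2⟩ h; simp_all [Prod.ext_iff])).symm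
    simp only [condMutualInfo]
    linarith
  -- conditional entropy of the full Y block
  have hE1a : entropy p (fun ω => (((fun s : Fin T => Y s ω), θ ω),
        (θt ω, (fun s : Fin T => X s ω))))
      = entropy p (fun ω => ((fun s : Fin T => Y s ω),
          (θ ω, θt ω, (fun s : Fin T => X s ω)))) :=
    (entropy_comp_inj p (fun ω => (((fun s : Fin T => Y s ω), θ ω),
        (θt ω, (fun s : Fin T => X s ω))))
      (fun z => (z.1.1, (z.1.2, z.2.1, z.2.2)))
      (by rintro ⟨⟨y1, n1⟩, t1, x1⟩ ⟨⟨y2, n2⟩, t2, x2⟩ h; simp_all [Prod.ext_iff])).symm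
  have hE1b : entropy p (fun ω => ((fun s : Fin T => Y s ω),
        (θ ω, θt ω, (fun s : Fin T => X s ω))))
      = entropy p (fun ω => (θ ω, θt ω, (fun s : Fin T => X s ω))) + (T : ℝ) * c := by
    rw [condent p (fun ω => (fun s : Fin T => Y s ω))
      (fun ω => (θ ω, θt ω, (fun s : Fin T => X s ω)))
      (fun w => π w.1 * lam w.1 w.2.1 * ∏ s, μ (w.2.2 s))
      (fun w y => ∏ s, k (y s) w.1 (w.2.2 s))
      (fun w => by
        rw [sumprod (fun s b => k b w.1 (w.2.2 s))]
        exact Finset.prod_eq_one fun s _ => hk1 w.1 (w.2.2 s))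
      (fun y w => by
        obtain ⟨ν, τ, x⟩ := w
        exact marg_d6 π lam μ k p θ θt X Y hjoint y ν τ x)]
    congr 1
    exact csum_full π lam μ k hμ1 hlam1 hk1
  -- conditional entropy of a single Y
  have hE3a : entropy p (fun ω => ((Y i0 ω, θ ω), (θt ω, X i0 ω)))
      = entropy p (fun ω => (Y i0 ω, (θ ω, θt ω, X i0 ω))) :=
    (entropy_comp_inj p (fun ω => ((Y i0 ω, θ ω), (θt ω, X i0 ω)))
      (fun z => (z.1.1, (z.1.2, z.2.1, z.2.2)))
      (by rintro ⟨⟨y1, n1⟩, t1, x1⟩ ⟨⟨y2, n2⟩, t2, x2⟩ h; simp_all [Prod.ext_iff])).symm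
  have hE3b : entropy p (fun ω => (Y i0 ω, (θ ω, θt ω, X i0 ω)))
      = entropy p (fun ω => (θ ω, θt ω, X i0 ω)) + c := by
    rw [condent p (Y i0) (fun ω => (θ ω, θt ω, X i0 ω))
      (fun w => π w.1 * lam w.1 w.2.1 * μ w.2.2)
      (fun w b => k b w.1 w.2.2)
      (fun w => hk1 w.1 w.2.2)
      (fun b w => by
        obtain ⟨ν, τ, a⟩ := w
        exact marg_d5 π lam μ k p θ θt X Y hμ1 hk1 hjoint i0 b ν τ a)]
    congr 1
    exact csum_single π lam μ k hlam1
  -- subadditivity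
  have hsub : entropy p (fun ω => ((fun s : Fin T => Y s ω),
        (θt ω, (fun s : Fin T => X s ω))))
      - entropy p (fun ω => (θt ω, (fun s : Fin T => X s ω)))
      ≤ ∑ s : Fin T, (entropy p (fun ω => (Y s ω, (θt ω, X s ω)))
          - entropy p (fun ω => (θt ω, X s ω))) :=
    subadd p hp0 hp1 Y (fun ω => (θt ω, (fun s : Fin T => X s ω))) (fun s w => (w.1, w.2 s))
  -- identical distribution across coordinates
  have hs1 : ∀ s : Fin T, entropy p (fun ω => (Y s ω, (θt ω, X s ω)))
      = entropy p (fun ω => (Y i0 ω, (θt ω, X i0 ω))) := by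
    intro s
    refine entropy_congr p fun z => ?_
    obtain ⟨b, τ, a⟩ := z
    rw [marg_d1 π lam μ k p θ θt X Y hμ1 hk1 hjoint s b τ a,
      marg_d1 π lam μ k p θ θt X Y hμ1 hk1 hjoint i0 b τ a]
  have hs2 : ∀ s : Fin T, entropy p (fun ω => (θt ω, X s ω))
      = entropy p (fun ω => (θt ω, X i0 ω)) := by
    intro s
    refine entropy_congr p fun z => ?_
    obtain ⟨τ, a⟩ := z
    rw [marg_d2 π lam μ k p θ θt X Y hμ1 hk1 hjoint s τ a,
      marg_d2 π lam μ k p θ θt X Y hμ1 hk1 hjoint i0 τ a]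
  have hcollapse : ∑ s : Fin T, (entropy p (fun ω => (Y s ω, (θt ω, X s ω)))
        - entropy p (fun ω => (θt ω, X s ω)))
      = (T : ℝ) * (entropy p (fun ω => (Y i0 ω, (θt ω, X i0 ω)))
        - entropy p (fun ω => (θt ω, X i0 ω))) := by
    rw [Finset.sum_congr rfl fun s _ => by rw [hs1 s, hs2 s]]
    rw [Finset.sum_const, Finset.card_univ, Fintype.card_fin, nsmul_eq_mul]
  -- expand both conditional mutual informations
  have hYexp : condMutualInfo p (fun ω => (fun s : Fin T => Y s ω)) θ
        (fun ω => (θt ω, (fun s : Fin T => X s ω)))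
      = entropy p (fun ω => ((fun s : Fin T => Y s ω), (θt ω, (fun s : Fin T => X s ω))))
        + entropy p (fun ω => (θ ω, (θt ω, (fun s : Fin T => X s ω))))
        - entropy p (fun ω => (((fun s : Fin T => Y s ω), θ ω),
            (θt ω, (fun s : Fin T => X s ω))))
        - entropy p (fun ω => (θt ω, (fun s : Fin T => X s ω))) := by
    simp only [condMutualInfo]
  have hRexp : condMutualInfo p (Y i0) θ (fun ω => (θt ω, X i0 ω))
      = entropy p (fun ω => (Y i0 ω, (θt ω, X i0 ω)))
        + entropy p (fun ω => (θ ω, (θt ω, X i0 ω)))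
        - entropy p (fun ω => ((Y i0 ω, θ ω), (θt ω, X i0 ω)))
        - entropy p (fun ω => (θt ω, X i0 ω)) := by
    simp only [condMutualInfo]
  -- put everything together
  have hTpos : (0 : ℝ) < (T : ℝ) := by exact_mod_cast hT0
  rw [div_le_iff₀ hTpos]
  have key : condMutualInfo p
        (fun ω => ((fun s : Fin T => X s ω), (fun s : Fin T => Y s ω))) θ θt
      ≤ (T : ℝ) * condMutualInfo p (Y i0) θ (fun ω => (θt ω, X i0 ω)) := by
    have hiden1 : entropy p (fun ω => (θ ω, (θt ω, (fun s : Fin T => X s ω))))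
        = entropy p (fun ω => (θ ω, θt ω, (fun s : Fin T => X s ω))) := rfl
    have hiden2 : entropy p (fun ω => (θ ω, (θt ω, X i0 ω)))
        = entropy p (fun ω => (θ ω, θt ω, X i0 ω)) := rfl
    have hmul : (T : ℝ) * (entropy p (fun ω => (Y i0 ω, (θt ω, X i0 ω)))
          - entropy p (fun ω => (θt ω, X i0 ω)) - c)
        = (T : ℝ) * (entropy p (fun ω => (Y i0 ω, (θt ω, X i0 ω)))
          - entropy p (fun ω => (θt ω, X i0 ω))) - (T : ℝ) * c := by ring
    nlinarith [hchain, hzero, hYexp, hRexp, hE1a, hE1b, hE3a, hE3b, hsub, hcollapse,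
      hiden1, hiden2, hmul]
  calc condMutualInfo p
        (fun ω => ((fun s : Fin T => X s ω), (fun s : Fin T => Y s ω))) θ θt
      ≤ (T : ℝ) * condMutualInfo p (Y i0) θ (fun ω => (θt ω, X i0 ω)) := key
    _ = condMutualInfo p (Y i0) θ (fun ω => (θt ω, X i0 ω)) * (T : ℝ) := by ring


end
end

section
/- For all real numbers x and y, (1/(1+e^{−x})) · ln( (1+e^{−y}) / (1+e^{−x}) ) + (1/(1+e^{x})) · ln( (1+e^{y}) / (1+e^{x}) ) ≤ (x − y)² / 8. Equivalently, the KL divergence between Bernoulli distributions with success probabilities σ(x) and σ(y), where σ is the logistic sigmoid, is at most one eighth of the squared difference of the logits. -/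
noncomputable def sig (t : ℝ) : ℝ := 1 / (1 + Real.exp (-t))

lemma sig_hasDeriv (t : ℝ) :
    HasDerivAt sig (Real.exp (-t) / (1 + Real.exp (-t)) ^ 2) t := by
  have h1 : HasDerivAt (fun s : ℝ => 1 + Real.exp (-s)) (-Real.exp (-t)) t := by
    have := (Real.hasDerivAt_exp (-t)).comp t (hasDerivAt_neg t)
    simpa using this.const_add 1
  have hne : (1 + Real.exp (-t)) ≠ 0 := by positivity
  have := h1.inv hne
  have h2 : HasDerivAt (fun s : ℝ => (1 + Real.exp (-s))⁻¹) (Real.exp (-t) / (1 + Real.exp (-t)) ^ 2) t := by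
    rw [neg_neg] at this; exact this
  have hsig : sig = fun s : ℝ => (1 + Real.exp (-s))⁻¹ := by
    funext s; simp [sig]
  rw [hsig]; exact h2

lemma sig_lipschitz (a b : ℝ) : |sig b - sig a| ≤ |b - a| / 4 := by
  have hdiff : Differentiable ℝ sig := fun t => (sig_hasDeriv t).differentiableAt
  have hbound : ∀ t : ℝ, ‖deriv sig t‖ ≤ 1/4 := by
    intro t
    rw [(sig_hasDeriv t).deriv]
    have he : 0 < Real.exp (-t) := Real.exp_pos _
    rw [Real.norm_eq_abs, abs_of_nonneg (by positivity)]
    rw [div_le_iff₀ (by positivity)]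
    nlinarith [sq_nonneg (1 - Real.exp (-t))]
  have := (lipschitzWith_of_nnnorm_deriv_le hdiff
    (C := (4:NNReal)⁻¹) (fun t => by
      rw [← NNReal.coe_le_coe, coe_nnnorm]
      simpa using hbound t)).dist_le_mul b a
  rw [Real.dist_eq, Real.dist_eq] at this
  calc |sig b - sig a| ≤ ((4:NNReal)⁻¹ : ℝ) * |b - a| := this
    _ = |b - a| / 4 := by simp [div_eq_inv_mul]

lemma one_sub_sig (x : ℝ) : 1 - sig x = 1 / (1 + Real.exp x) := by
  have h1 : (1 + Real.exp (-x)) ≠ 0 := by positivity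
  have h2 : (1 + Real.exp x) ≠ 0 := by positivity
  have h3 : Real.exp (-x) * Real.exp x = 1 := by
    rw [← Real.exp_add]; simp
  unfold sig
  field_simp
  nlinarith [h3]

/-- squared error upper bounds binary KL divergence. -/
theorem statement11 (x y : ℝ) :
    (1 / (1 + Real.exp (-x))) * Real.log ((1 + Real.exp (-y)) / (1 + Real.exp (-x)))
      + (1 / (1 + Real.exp x)) * Real.log ((1 + Real.exp y) / (1 + Real.exp x))
      ≤ (x - y) ^ 2 / 8 := by
  set p := sig x with hp
  set F : ℝ → ℝ := fun t => (t - x) ^ 2 / 8 -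
    (p * (Real.log (1 + Real.exp (-t)) - Real.log (1 + Real.exp (-x)))
      + (1 - p) * (Real.log (1 + Real.exp t) - Real.log (1 + Real.exp x))) with hF
  have hne : ∀ t : ℝ, (1 + Real.exp (-t)) ≠ 0 := fun t => by positivity
  have hne' : ∀ t : ℝ, (1 + Real.exp t) ≠ 0 := fun t => by positivity
  -- derivative of F
  have hderiv : ∀ t : ℝ, HasDerivAt F ((t - x) / 4 - (sig t - p)) t := by
    intro t
    have h1 : HasDerivAt (fun s : ℝ => 1 + Real.exp (-s)) (-Real.exp (-t)) t := by
      have := (Real.hasDerivAt_exp (-t)).comp t (hasDerivAt_neg t)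
      simpa using this.const_add 1
    have h2 : HasDerivAt (fun s : ℝ => 1 + Real.exp s) (Real.exp t) t :=
      (Real.hasDerivAt_exp t).const_add 1
    have hl1 : HasDerivAt (fun s : ℝ => Real.log (1 + Real.exp (-s)))
        (-Real.exp (-t) / (1 + Real.exp (-t))) t := h1.log (hne t)
    have hl2 : HasDerivAt (fun s : ℝ => Real.log (1 + Real.exp s))
        (Real.exp t / (1 + Real.exp t)) t := h2.log (hne' t)
    have hq : HasDerivAt (fun s : ℝ => (s - x) ^ 2 / 8) ((t - x) / 4) t := by
      have h := (((hasDerivAt_id t).sub_const x).pow 2).div_const 8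
      refine HasDerivAt.congr_deriv (f := fun s : ℝ => (s - x) ^ 2 / 8) h ?_
      simp only [id_eq, Nat.cast_ofNat, pow_one]
      ring
    have hcomb := hq.sub
      (((hl1.sub_const (Real.log (1 + Real.exp (-x)))).const_mul p).add
        ((hl2.sub_const (Real.log (1 + Real.exp x))).const_mul (1 - p)))
    have heq : (t - x) / 4 -
        (p * (-Real.exp (-t) / (1 + Real.exp (-t))) + (1 - p) * (Real.exp t / (1 + Real.exp t)))
        = (t - x) / 4 - (sig t - p) := by
      have hsig1 : -Real.exp (-t) / (1 + Real.exp (-t)) = sig t - 1 := by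
        rw [sig]; field_simp; ring
      have hsig2 : Real.exp t / (1 + Real.exp t) = sig t := by
        rw [sig]
        rw [div_eq_div_iff (hne' t) (hne t)]
        have h3 : Real.exp (-t) * Real.exp t = 1 := by rw [← Real.exp_add]; simp
        nlinarith [h3]
      rw [hsig1, hsig2]; ring
    exact heq ▸ hcomb
  have hcont : Continuous F := by
    have : Differentiable ℝ F := fun t => (hderiv t).differentiableAt
    exact this.continuous
  have hFx : F x = 0 := by simp [hF]
  -- final : F y ≥ 0
  have key : 0 ≤ F y := by
    rcases le_total x y with hxy | hxy
    · have hmono : MonotoneOn F (Set.Icc x y) := by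
        apply monotoneOn_of_deriv_nonneg (convex_Icc x y) hcont.continuousOn
        · intro t _; exact (hderiv t).differentiableAt.differentiableWithinAt
        · intro t ht
          rw [(hderiv t).deriv]
          rw [interior_Icc, Set.mem_Ioo] at ht
          have := sig_lipschitz x t
          rw [abs_of_pos (by linarith : (0:ℝ) < t - x)] at this
          linarith [le_abs_self (sig t - sig x)]
      have := hmono (Set.left_mem_Icc.mpr hxy) (Set.right_mem_Icc.mpr hxy) hxy
      linarith [hFx ▸ this]
    · have hanti : AntitoneOn F (Set.Icc y x) := by
        apply antitoneOn_of_deriv_nonpos (convex_Icc y x) hcont.continuousOn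
        · intro t _; exact (hderiv t).differentiableAt.differentiableWithinAt
        · intro t ht
          rw [(hderiv t).deriv]
          rw [interior_Icc, Set.mem_Ioo] at ht
          have := sig_lipschitz t x
          rw [abs_of_pos (by linarith : (0:ℝ) < x - t)] at this
          linarith [le_abs_self (sig x - sig t), abs_sub_comm (sig x) (sig t)]
      have := hanti (Set.left_mem_Icc.mpr hxy) (Set.right_mem_Icc.mpr hxy) hxy
      linarith [hFx ▸ this]
  -- unfold F y and match the goal
  rw [hF] at key
  simp only at key
  rw [Real.log_div (hne y) (hne x), Real.log_div (hne' y) (hne' x)]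
  have h1s := one_sub_sig x
  have hpx : (1 : ℝ) / (1 + Real.exp (-x)) = p := rfl
  have hsq : (x - y) ^ 2 = (y - x) ^ 2 := by ring
  rw [hpx, ← h1s, hsq]
  linarith
end

section
/- Fix positive integers n, K, N and define real numbers C_m(j) for positive integers m and j by the recursion C_1(j) = ∑_{i=j}^{n−1} (K/N)/(K+i) and C_{m+1}(j) = ∑_{i=j}^{n−1} (K/N)/(K+i) · C_m(i+1) (empty sums are 0). Then for all positive integers m and j with j < n and j + m ≤ n + 1: (1/m!) · (K/N)^m · ( ln( (K+n)/(K+m−1+j) ) )^m ≤ C_m(j) ≤ (1/m!) · (K/N)^m · ( ln( (K+n)/(K−1+j) ) )^m. -/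
/-!
Statement 14: bounds on the nested sums `C_m(j)` defined by the recursion
`C_1(j) = ∑_{i=j}^{n−1} (K/N)/(K+i)` and
`C_{m+1}(j) = ∑_{i=j}^{n−1} (K/N)/(K+i) · C_m(i+1)`.
-/


lemma aux_log_le_inv (x : ℝ) (hx : 1 ≤ x) :
    Real.log (x + 1) - Real.log x ≤ 1 / x := by
  have hx0 : (0:ℝ) < x := lt_of_lt_of_le one_pos hx
  have h1 : Real.log (x + 1) - Real.log x = Real.log ((x + 1) / x) := by
    rw [Real.log_div (by positivity) (ne_of_gt hx0)]
  have h2 := Real.log_le_sub_one_of_pos (x := (x + 1) / x) (by positivity)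
  have h3 : (x + 1) / x - 1 = 1 / x := by field_simp; ring
  linarith [h1, h2, h3]

lemma aux_inv_le_log (x : ℝ) (hx : 1 ≤ x) :
    1 / (x + 1) ≤ Real.log (x + 1) - Real.log x := by
  have hx0 : (0:ℝ) < x := lt_of_lt_of_le one_pos hx
  have h1 : Real.log x - Real.log (x + 1) = Real.log (x / (x + 1)) := by
    rw [Real.log_div (ne_of_gt hx0) (by positivity)]
  have h2 := Real.log_le_sub_one_of_pos (x := x / (x + 1)) (by positivity)
  have h3 : x / (x + 1) - 1 = -(1 / (x + 1)) := by field_simp; ring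
  linarith [h1, h2, h3]

lemma aux_log_diff_anti (a b : ℝ) (ha : 0 < a) (hab : a ≤ b) :
    Real.log (b + 1) - Real.log b ≤ Real.log (a + 1) - Real.log a := by
  have hb : (0:ℝ) < b := lt_of_lt_of_le ha hab
  have h1 : Real.log (b + 1) - Real.log b = Real.log ((b + 1) / b) := by
    rw [Real.log_div (by positivity) (ne_of_gt hb)]
  have h2 : Real.log (a + 1) - Real.log a = Real.log ((a + 1) / a) := by
    rw [Real.log_div (by positivity) (ne_of_gt ha)]
  rw [h1, h2]
  apply Real.log_le_log (by positivity)
  rw [div_le_div_iff₀ hb ha]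
  nlinarith

lemma aux_pow_upper (m : ℕ) (a b : ℝ) (hb : 0 ≤ b) (hab : b ≤ a) :
    a ^ (m + 1) - b ^ (m + 1) ≤ ((m : ℝ) + 1) * a ^ m * (a - b) := by
  induction m with
  | zero => simp
  | succ m ih =>
    have ha : 0 ≤ a := hb.trans hab
    have hpow : b ^ (m + 1) ≤ a ^ (m + 1) := pow_le_pow_left₀ hb hab _
    have hpm : b ^ m ≤ a ^ m := pow_le_pow_left₀ hb hab _
    have key : a ^ (m + 2) - b ^ (m + 2)
        = a * (a ^ (m + 1) - b ^ (m + 1)) + b ^ (m + 1) * (a - b) := by ring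
    have h2 : a * (a ^ (m + 1) - b ^ (m + 1)) ≤ a * (((m : ℝ) + 1) * a ^ m * (a - b)) :=
      mul_le_mul_of_nonneg_left ih ha
    have h3 : b ^ (m + 1) * (a - b) ≤ a ^ (m + 1) * (a - b) :=
      mul_le_mul_of_nonneg_right hpow (by linarith)
    have : a * (((m : ℝ) + 1) * a ^ m * (a - b)) = ((m : ℝ) + 1) * a ^ (m + 1) * (a - b) := by
      ring
    push_cast
    nlinarith

lemma aux_pow_lower (m : ℕ) (a b : ℝ) (hb : 0 ≤ b) (hab : b ≤ a) :
    ((m : ℝ) + 1) * b ^ m * (a - b) ≤ a ^ (m + 1) - b ^ (m + 1) := by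
  induction m with
  | zero => simp
  | succ m ih =>
    have ha : 0 ≤ a := hb.trans hab
    have hpow : b ^ (m + 1) ≤ a ^ (m + 1) := pow_le_pow_left₀ hb hab _
    have hpm : b ^ m ≤ a ^ m := pow_le_pow_left₀ hb hab _
    have h2 : b * (((m : ℝ) + 1) * b ^ m * (a - b)) ≤ a * (a ^ (m + 1) - b ^ (m + 1)) := by
      calc b * (((m : ℝ) + 1) * b ^ m * (a - b)) ≤ b * (a ^ (m + 1) - b ^ (m + 1)) :=
            mul_le_mul_of_nonneg_left ih hb
        _ ≤ a * (a ^ (m + 1) - b ^ (m + 1)) :=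
            mul_le_mul_of_nonneg_right hab (by linarith)
    calc ((↑(m + 1) : ℝ) + 1) * b ^ (m + 1) * (a - b)
        = b * (((m : ℝ) + 1) * b ^ m * (a - b)) + b ^ (m + 1) * (a - b) := by push_cast; ring
      _ ≤ a * (a ^ (m + 1) - b ^ (m + 1)) + b ^ (m + 1) * (a - b) := by linarith
      _ = a ^ (m + 1 + 1) - b ^ (m + 1 + 1) := by ring

lemma sum_Ico_telescope (f : ℕ → ℝ) (a : ℕ) :
    ∀ b : ℕ, a ≤ b → ∑ i ∈ Finset.Ico a b, (f i - f (i + 1)) = f a - f b := by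
  intro b
  induction b with
  | zero => intro h; simp [Nat.le_zero.mp h]
  | succ b ih =>
    intro h
    rcases Nat.eq_or_lt_of_le h with heq | hlt
    · rw [heq]; simp
    · have hab : a ≤ b := Nat.lt_succ_iff.mp hlt
      rw [Finset.sum_Ico_succ_top hab, ih hab]; ring

/-- bounds on the multinomial nested sums `C_m(j)`. -/
theorem statement14 (n K N : ℕ) (hn : 0 < n) (hK : 0 < K) (hN : 0 < N)
    (C : ℕ → ℕ → ℝ)
    (hbase : ∀ j : ℕ, C 1 j = ∑ i ∈ Finset.Ico j n, ((K : ℝ) / N) / ((K : ℝ) + i))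
    (hrec : ∀ (m j : ℕ), 1 ≤ m →
      C (m + 1) j = ∑ i ∈ Finset.Ico j n, (((K : ℝ) / N) / ((K : ℝ) + i)) * C m (i + 1)) :
    ∀ (m j : ℕ), 1 ≤ m → 1 ≤ j → j < n → j + m ≤ n + 1 →
      (1 / (Nat.factorial m : ℝ)) * ((K : ℝ) / N) ^ m *
          (Real.log (((K : ℝ) + n) / ((K : ℝ) + m - 1 + j))) ^ m ≤ C m j ∧
      C m j ≤ (1 / (Nat.factorial m : ℝ)) * ((K : ℝ) / N) ^ m *
          (Real.log (((K : ℝ) + n) / ((K : ℝ) - 1 + j))) ^ m := by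
  have hK1 : (1:ℝ) ≤ (K:ℝ) := by exact_mod_cast hK
  have hN0 : (0:ℝ) < (N:ℝ) := by exact_mod_cast hN
  have hn1 : (1:ℝ) ≤ (n:ℝ) := by exact_mod_cast hn
  have hKN : (0:ℝ) ≤ (K:ℝ) / N := by positivity
  -- nonnegativity
  have hnonneg : ∀ m : ℕ, 1 ≤ m → ∀ j : ℕ, 0 ≤ C m j := by
    intro m
    induction m with
    | zero => intro h; exact absurd h (by norm_num)
    | succ m ih =>
      intro _ j
      rcases Nat.eq_zero_or_pos m with rfl | hm
      · rw [hbase j]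
        exact Finset.sum_nonneg fun i _ => by positivity
      · rw [hrec m j hm]
        exact Finset.sum_nonneg fun i _ =>
          mul_nonneg (by positivity) (ih hm (i + 1))
  -- upper bound
  have hupper : ∀ m : ℕ, 1 ≤ m → ∀ j : ℕ, 1 ≤ j → j ≤ n →
      C m j ≤ 1 / (Nat.factorial m : ℝ) * ((K : ℝ) / N) ^ m *
        (Real.log (((K : ℝ) + n) / ((K : ℝ) - 1 + j))) ^ m := by
    intro m
    induction m with
    | zero => intro h; exact absurd h (by norm_num)
    | succ m ih =>
      intro _ j hj hjn
      have hj1 : (1:ℝ) ≤ (j:ℝ) := by exact_mod_cast hj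
      have hjn' : (j:ℝ) ≤ (n:ℝ) := by exact_mod_cast hjn
      have hlogj : Real.log (((K:ℝ) + n) / ((K:ℝ) - 1 + j))
          = Real.log ((K:ℝ) + n) - Real.log ((K:ℝ) + j - 1) := by
        rw [show ((K:ℝ) - 1 + j) = (K:ℝ) + j - 1 by ring,
          Real.log_div (by positivity) (by intro h; nlinarith)]
      rcases Nat.eq_zero_or_pos m with rfl | hm
      · -- base case m = 1
        rw [hbase j]
        have hterm : ∀ i ∈ Finset.Ico j n,
            ((K:ℝ)/N) / ((K:ℝ) + i) ≤
            (K:ℝ)/N * ((-(Real.log ((K:ℝ) + (i:ℕ) - 1))) - (-(Real.log ((K:ℝ) + ((i + 1 : ℕ) : ℝ) - 1)))) := by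
          intro i hi
          obtain ⟨hji, hin⟩ := Finset.mem_Ico.mp hi
          have hi1 : (1:ℝ) ≤ (i:ℝ) := by exact_mod_cast (hj.trans hji)
          have h := aux_inv_le_log ((K:ℝ) + i - 1) (by linarith)
          rw [show ((K:ℝ) + i - 1 + 1) = (K:ℝ) + i by ring] at h
          have harg : ((K:ℝ) + ((i:ℕ)+1 : ℕ) - 1) = (K:ℝ) + i := by push_cast; ring
          rw [harg]
          have : ((K:ℝ)/N) / ((K:ℝ) + i) = (K:ℝ)/N * (1 / ((K:ℝ) + i)) := by ring
          rw [this]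
          apply mul_le_mul_of_nonneg_left _ hKN
          linarith
        calc ∑ i ∈ Finset.Ico j n, ((K:ℝ)/N) / ((K:ℝ) + i)
            ≤ ∑ i ∈ Finset.Ico j n,
              (K:ℝ)/N * ((-(Real.log ((K:ℝ) + (i:ℕ) - 1))) - (-(Real.log ((K:ℝ) + ((i + 1 : ℕ) : ℝ) - 1)))) :=
              Finset.sum_le_sum hterm
          _ = (K:ℝ)/N * ((-(Real.log ((K:ℝ) + (j:ℕ) - 1))) - (-(Real.log ((K:ℝ) + (n:ℕ) - 1)))) := by
              rw [← Finset.mul_sum,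
                sum_Ico_telescope (fun i => -(Real.log ((K:ℝ) + (i:ℕ) - 1))) j n hjn]
          _ ≤ 1 / (Nat.factorial 1 : ℝ) * ((K : ℝ) / N) ^ 1 *
              (Real.log (((K : ℝ) + n) / ((K : ℝ) - 1 + j))) ^ 1 := by
              rw [hlogj]
              have hlog : Real.log ((K:ℝ) + n - 1) ≤ Real.log ((K:ℝ) + n) :=
                Real.log_le_log (by linarith) (by linarith)
              simp only [Nat.factorial_one, Nat.cast_one, pow_one]
              rw [show (1:ℝ)/1 * ((K:ℝ)/N) = (K:ℝ)/N by ring]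
              apply mul_le_mul_of_nonneg_left _ hKN
              linarith
      · -- inductive step
        rw [hrec m j hm]
        set c : ℝ := 1 / (Nat.factorial m : ℝ) * ((K : ℝ) / N) ^ m with hc
        have hc0 : (0:ℝ) ≤ c := by positivity
        have hconst : (0:ℝ) ≤ (K:ℝ)/N * c / ((m:ℝ) + 1) :=
          div_nonneg (mul_nonneg hKN hc0) (by positivity)
        have hterm : ∀ i ∈ Finset.Ico j n,
            ((K:ℝ)/N) / ((K:ℝ) + i) * C m (i + 1) ≤
            (K:ℝ)/N * c / ((m:ℝ) + 1) *
              ((Real.log ((K:ℝ) + n) - Real.log ((K:ℝ) + (i:ℕ) - 1)) ^ (m+1)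
               - (Real.log ((K:ℝ) + n) - Real.log ((K:ℝ) + ((i + 1 : ℕ) : ℝ) - 1)) ^ (m+1)) := by
          intro i hi
          obtain ⟨hji, hin⟩ := Finset.mem_Ico.mp hi
          have hi1 : (1:ℝ) ≤ (i:ℝ) := by exact_mod_cast (hj.trans hji)
          have hin' : (i:ℝ) + 1 ≤ (n:ℝ) := by exact_mod_cast hin
          set a : ℝ := Real.log ((K:ℝ) + n) - Real.log ((K:ℝ) + i - 1) with ha
          set b : ℝ := Real.log ((K:ℝ) + n) - Real.log ((K:ℝ) + i) with hb
          have hb0 : 0 ≤ b := by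
            have := Real.log_le_log (show (0:ℝ) < (K:ℝ) + i by positivity)
              (show (K:ℝ) + i ≤ (K:ℝ) + n by linarith)
            rw [hb]; linarith
          have hba : b ≤ a := by
            have := Real.log_le_log (show (0:ℝ) < (K:ℝ) + i - 1 by linarith)
              (show (K:ℝ) + i - 1 ≤ (K:ℝ) + i by linarith)
            rw [ha, hb]; linarith
          have hCb : C m (i + 1) ≤ c * b ^ m := by
            have h := ih hm (i + 1) (by omega) (by omega)
            rw [show ((K:ℝ) - 1 + ((i:ℕ)+1 : ℕ)) = (K:ℝ) + i by push_cast; ring,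
              Real.log_div (by positivity) (by positivity), ← hb] at h
            exact h
          have hinv : a - b ≥ 1 / ((K:ℝ) + i) := by
            have h := aux_inv_le_log ((K:ℝ) + i - 1) (by linarith)
            rw [show ((K:ℝ) + i - 1 + 1) = (K:ℝ) + i by ring] at h
            rw [ha, hb]; linarith
          have harg : ((K:ℝ) + ((i:ℕ)+1 : ℕ) - 1) = (K:ℝ) + i := by push_cast; ring
          rw [harg, ← hb]
          have hcbm : (0:ℝ) ≤ c * b ^ m := mul_nonneg hc0 (pow_nonneg hb0 _)
          calc ((K:ℝ)/N) / ((K:ℝ) + i) * C m (i + 1)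
              ≤ ((K:ℝ)/N) / ((K:ℝ) + i) * (c * b ^ m) :=
                mul_le_mul_of_nonneg_left hCb (by positivity)
            _ = ((K:ℝ)/N) * (c * b ^ m) * (1 / ((K:ℝ) + i)) := by ring
            _ ≤ ((K:ℝ)/N) * (c * b ^ m) * (a - b) :=
                mul_le_mul_of_nonneg_left hinv (mul_nonneg hKN hcbm)
            _ = (K:ℝ)/N * c / ((m:ℝ) + 1) * (((m:ℝ) + 1) * b ^ m * (a - b)) := by
                field_simp
            _ ≤ (K:ℝ)/N * c / ((m:ℝ) + 1) * (a ^ (m+1) - b ^ (m+1)) :=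
                mul_le_mul_of_nonneg_left (aux_pow_lower m a b hb0 hba) hconst
        calc ∑ i ∈ Finset.Ico j n, ((K:ℝ)/N) / ((K:ℝ) + i) * C m (i + 1)
            ≤ ∑ i ∈ Finset.Ico j n, (K:ℝ)/N * c / ((m:ℝ) + 1) *
              ((Real.log ((K:ℝ) + n) - Real.log ((K:ℝ) + (i:ℕ) - 1)) ^ (m+1)
               - (Real.log ((K:ℝ) + n) - Real.log ((K:ℝ) + ((i + 1 : ℕ) : ℝ) - 1)) ^ (m+1)) :=
              Finset.sum_le_sum hterm
          _ = (K:ℝ)/N * c / ((m:ℝ) + 1) *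
              ((Real.log ((K:ℝ) + n) - Real.log ((K:ℝ) + (j:ℕ) - 1)) ^ (m+1)
               - (Real.log ((K:ℝ) + n) - Real.log ((K:ℝ) + (n:ℕ) - 1)) ^ (m+1)) := by
              rw [← Finset.mul_sum,
                sum_Ico_telescope
                  (fun i => (Real.log ((K:ℝ) + n) - Real.log ((K:ℝ) + (i:ℕ) - 1)) ^ (m+1)) j n hjn]
          _ ≤ (K:ℝ)/N * c / ((m:ℝ) + 1) *
              (Real.log ((K:ℝ) + n) - Real.log ((K:ℝ) + (j:ℕ) - 1)) ^ (m+1) := by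
              have hnn : (0:ℝ) ≤ (Real.log ((K:ℝ) + n) - Real.log ((K:ℝ) + (n:ℕ) - 1)) ^ (m+1) := by
                have := Real.log_le_log (show (0:ℝ) < (K:ℝ) + n - 1 by linarith)
                  (show (K:ℝ) + n - 1 ≤ (K:ℝ) + n by linarith)
                exact pow_nonneg (by linarith) _
              apply mul_le_mul_of_nonneg_left _ hconst
              linarith
          _ = 1 / (Nat.factorial (m+1) : ℝ) * ((K : ℝ) / N) ^ (m+1) *
              (Real.log (((K : ℝ) + n) / ((K : ℝ) - 1 + j))) ^ (m+1) := by
              rw [hlogj, hc]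
              have hfac : ((Nat.factorial (m+1) : ℕ) : ℝ) = ((m:ℝ) + 1) * (Nat.factorial m : ℝ) := by
                rw [Nat.factorial_succ]; push_cast; ring
              rw [hfac]
              have hm0 : (Nat.factorial m : ℝ) ≠ 0 := by positivity
              have hN' : (N:ℝ) ≠ 0 := ne_of_gt hN0
              field_simp
              have hKN' : (N:ℝ) * ((K:ℝ) / N) = K := mul_div_cancel₀ _ hN'
              linear_combination (-((K:ℝ)/N) ^ m * (Real.log ((K:ℝ) + n) - Real.log ((K:ℝ) + j - 1)) ^ (m + 1)) * hKN'
  -- lower bound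
  have hlower : ∀ m : ℕ, 1 ≤ m → ∀ j : ℕ, 1 ≤ j → j + m ≤ n + 1 →
      1 / (Nat.factorial m : ℝ) * ((K : ℝ) / N) ^ m *
        (Real.log (((K : ℝ) + n) / ((K : ℝ) + m - 1 + j))) ^ m ≤ C m j := by
    intro m
    induction m with
    | zero => intro h; exact absurd h (by norm_num)
    | succ m ih =>
      intro _ j hj hjmn
      have hj1 : (1:ℝ) ≤ (j:ℝ) := by exact_mod_cast hj
      rcases Nat.eq_zero_or_pos m with rfl | hm
      · -- base case m = 1
        have hjn : j ≤ n := by omega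
        have hjn' : (j:ℝ) ≤ (n:ℝ) := by exact_mod_cast hjn
        rw [hbase j]
        have hlogj : Real.log (((K:ℝ) + n) / ((K:ℝ) + (1:ℕ) - 1 + j))
            = Real.log ((K:ℝ) + n) - Real.log ((K:ℝ) + j) := by
          rw [show ((K:ℝ) + (1:ℕ) - 1 + j) = (K:ℝ) + j by push_cast; ring,
            Real.log_div (by positivity) (by positivity)]
        have hterm : ∀ i ∈ Finset.Ico j n,
            (K:ℝ)/N * ((-(Real.log ((K:ℝ) + (i:ℕ)))) - (-(Real.log ((K:ℝ) + ((i + 1 : ℕ) : ℝ))))) ≤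
            ((K:ℝ)/N) / ((K:ℝ) + i) := by
          intro i hi
          obtain ⟨hji, hin⟩ := Finset.mem_Ico.mp hi
          have h := aux_log_le_inv ((K:ℝ) + i)
            (by have := Nat.cast_nonneg (α := ℝ) i; linarith)
          have harg : ((K:ℝ) + ((i:ℕ)+1 : ℕ)) = (K:ℝ) + i + 1 := by push_cast; ring
          rw [harg]
          have : ((K:ℝ)/N) / ((K:ℝ) + i) = (K:ℝ)/N * (1 / ((K:ℝ) + i)) := by ring
          rw [this]
          apply mul_le_mul_of_nonneg_left _ hKN
          linarith
        calc 1 / (Nat.factorial 1 : ℝ) * ((K : ℝ) / N) ^ 1 *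
            (Real.log (((K : ℝ) + n) / ((K : ℝ) + (1:ℕ) - 1 + j))) ^ 1
            = (K:ℝ)/N * ((-(Real.log ((K:ℝ) + (j:ℕ)))) - (-(Real.log ((K:ℝ) + (n:ℕ))))) := by
              rw [hlogj]
              simp only [Nat.factorial_one, Nat.cast_one, pow_one]
              ring
          _ = ∑ i ∈ Finset.Ico j n,
              (K:ℝ)/N * ((-(Real.log ((K:ℝ) + (i:ℕ)))) - (-(Real.log ((K:ℝ) + ((i + 1 : ℕ) : ℝ))))) := by
              rw [← Finset.mul_sum,
                sum_Ico_telescope (fun i => -(Real.log ((K:ℝ) + (i:ℕ)))) j n hjn]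
          _ ≤ ∑ i ∈ Finset.Ico j n, ((K:ℝ)/N) / ((K:ℝ) + i) := Finset.sum_le_sum hterm
      · -- inductive step
        have hjm : j + m ≤ n := by omega
        have hmn : m ≤ n := by omega
        have hjnm : j ≤ n - m := by omega
        have hm1 : (1:ℝ) ≤ (m:ℝ) := by exact_mod_cast hm
        have hmn' : (m:ℝ) ≤ (n:ℝ) := by exact_mod_cast hmn
        have hjm' : (j:ℝ) + (m:ℝ) ≤ (n:ℝ) := by exact_mod_cast hjm
        rw [hrec m j hm]
        set c : ℝ := 1 / (Nat.factorial m : ℝ) * ((K : ℝ) / N) ^ m with hc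
        have hc0 : (0:ℝ) ≤ c := by positivity
        have hconst : (0:ℝ) ≤ (K:ℝ)/N * c / ((m:ℝ) + 1) :=
          div_nonneg (mul_nonneg hKN hc0) (by positivity)
        have hterm : ∀ i ∈ Finset.Ico j (n - m),
            (K:ℝ)/N * c / ((m:ℝ) + 1) *
              ((Real.log ((K:ℝ) + n) - Real.log ((K:ℝ) + m + (i:ℕ))) ^ (m+1)
               - (Real.log ((K:ℝ) + n) - Real.log ((K:ℝ) + m + ((i + 1 : ℕ) : ℝ))) ^ (m+1)) ≤
            ((K:ℝ)/N) / ((K:ℝ) + i) * C m (i + 1) := by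
          intro i hi
          obtain ⟨hji, hin⟩ := Finset.mem_Ico.mp hi
          have him : i + m < n := by omega
          have him' : (i:ℝ) + (m:ℝ) + 1 ≤ (n:ℝ) := by exact_mod_cast him
          set a : ℝ := Real.log ((K:ℝ) + n) - Real.log ((K:ℝ) + m + i) with ha
          set b : ℝ := Real.log ((K:ℝ) + n) - Real.log ((K:ℝ) + m + i + 1) with hb
          have hb0 : 0 ≤ b := by
            have := Real.log_le_log (show (0:ℝ) < (K:ℝ) + m + i + 1 by positivity)
              (show (K:ℝ) + m + i + 1 ≤ (K:ℝ) + n by linarith)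
            rw [hb]; linarith
          have hba : b ≤ a := by
            have := Real.log_le_log (show (0:ℝ) < (K:ℝ) + m + i by positivity)
              (show (K:ℝ) + m + i ≤ (K:ℝ) + m + i + 1 by linarith)
            rw [ha, hb]; linarith
          have hCa : c * a ^ m ≤ C m (i + 1) := by
            have h := ih hm (i + 1) (by omega) (by omega)
            rw [show ((K:ℝ) + m - 1 + ((i:ℕ)+1 : ℕ)) = (K:ℝ) + m + i by push_cast; ring,
              Real.log_div (by positivity) (by positivity), ← ha] at h
            exact h
          have hinv : a - b ≤ 1 / ((K:ℝ) + i) := by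
            have h1 := aux_log_le_inv ((K:ℝ) + i)
              (by have := Nat.cast_nonneg (α := ℝ) i; linarith)
            have h2 := aux_log_diff_anti ((K:ℝ) + i) ((K:ℝ) + m + i) (by positivity)
              (by linarith)
            rw [ha, hb]; linarith
          have harg : ((K:ℝ) + m + ((i:ℕ)+1 : ℕ)) = (K:ℝ) + m + i + 1 := by push_cast; ring
          rw [harg, ← hb]
          have hcam : (0:ℝ) ≤ c * a ^ m := mul_nonneg hc0 (pow_nonneg (hb0.trans hba) _)
          calc (K:ℝ)/N * c / ((m:ℝ) + 1) * (a ^ (m+1) - b ^ (m+1))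
              ≤ (K:ℝ)/N * c / ((m:ℝ) + 1) * (((m:ℝ) + 1) * a ^ m * (a - b)) :=
                mul_le_mul_of_nonneg_left (aux_pow_upper m a b hb0 hba) hconst
            _ = ((K:ℝ)/N) * (c * a ^ m) * (a - b) := by field_simp
            _ ≤ ((K:ℝ)/N) * (c * a ^ m) * (1 / ((K:ℝ) + i)) :=
                mul_le_mul_of_nonneg_left hinv (mul_nonneg hKN hcam)
            _ = ((K:ℝ)/N) / ((K:ℝ) + i) * (c * a ^ m) := by ring
            _ ≤ ((K:ℝ)/N) / ((K:ℝ) + i) * C m (i + 1) :=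
                mul_le_mul_of_nonneg_left hCa (by positivity)
        have hlogj : Real.log (((K:ℝ) + n) / ((K:ℝ) + ((m:ℕ)+1 : ℕ) - 1 + j))
            = Real.log ((K:ℝ) + n) - Real.log ((K:ℝ) + m + j) := by
          rw [show ((K:ℝ) + ((m:ℕ)+1 : ℕ) - 1 + j) = (K:ℝ) + m + j by push_cast; ring,
            Real.log_div (by positivity) (by positivity)]
        calc 1 / (Nat.factorial (m+1) : ℝ) * ((K : ℝ) / N) ^ (m+1) *
            (Real.log (((K : ℝ) + n) / ((K : ℝ) + ((m:ℕ)+1 : ℕ) - 1 + j))) ^ (m+1)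
            = (K:ℝ)/N * c / ((m:ℝ) + 1) *
              ((Real.log ((K:ℝ) + n) - Real.log ((K:ℝ) + m + (j:ℕ))) ^ (m+1)
               - (Real.log ((K:ℝ) + n) - Real.log ((K:ℝ) + m + ((n - m : ℕ):ℕ))) ^ (m+1)) := by
              rw [hlogj, hc]
              have hcast : (((n - m : ℕ) : ℕ) : ℝ) = (n:ℝ) - (m:ℝ) := by
                push_cast [Nat.cast_sub hmn]; ring
              rw [hcast, show ((K:ℝ) + m + ((n:ℝ) - m)) = (K:ℝ) + n by ring, sub_self]
              have hfac : ((Nat.factorial (m+1) : ℕ) : ℝ) = ((m:ℝ) + 1) * (Nat.factorial m : ℝ) := by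
                rw [Nat.factorial_succ]; push_cast; ring
              rw [hfac]
              have hm0 : (Nat.factorial m : ℝ) ≠ 0 := by positivity
              rw [show ((0:ℝ)) ^ (m+1) = 0 by simp]
              have hN' : (N:ℝ) ≠ 0 := ne_of_gt hN0
              field_simp
              have hKN' : (N:ℝ) * ((K:ℝ) / N) = K := mul_div_cancel₀ _ hN'
              linear_combination (((K:ℝ)/N) ^ m * (Real.log ((K:ℝ) + n) - Real.log ((K:ℝ) + m + j)) ^ (m + 1)) * hKN'
          _ = ∑ i ∈ Finset.Ico j (n - m), (K:ℝ)/N * c / ((m:ℝ) + 1) *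
              ((Real.log ((K:ℝ) + n) - Real.log ((K:ℝ) + m + (i:ℕ))) ^ (m+1)
               - (Real.log ((K:ℝ) + n) - Real.log ((K:ℝ) + m + ((i + 1 : ℕ) : ℝ))) ^ (m+1)) := by
              rw [← Finset.mul_sum,
                sum_Ico_telescope
                  (fun i => (Real.log ((K:ℝ) + n) - Real.log ((K:ℝ) + m + (i:ℕ))) ^ (m+1))
                  j (n - m) hjnm]
          _ ≤ ∑ i ∈ Finset.Ico j (n - m), ((K:ℝ)/N) / ((K:ℝ) + i) * C m (i + 1) :=
              Finset.sum_le_sum hterm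
          _ ≤ ∑ i ∈ Finset.Ico j n, ((K:ℝ)/N) / ((K:ℝ) + i) * C m (i + 1) := by
              apply Finset.sum_le_sum_of_subset_of_nonneg
              · exact Finset.Ico_subset_Ico_right (by omega)
              · intro i _ _
                exact mul_nonneg (by positivity) (hnonneg m hm (i + 1))
  intro m j hm hj hjn hjmn
  exact ⟨hlower m hm j hj hjmn, hupper m hm j hj (le_of_lt hjn)⟩
end

section
/- For all positive integers i, n, K, N such that 2 ≤ K, K² ≤ N, and n ≤ N, one has (1/(2i)!) · (K/N)^{2i} · ( ln( (K+n)/(K−1) ) )^{2i} − (1/(2i+1)!) · (K/N)^{2i+1} · ( ln( (K+n)/(K+2i) ) )^{2i+1} ≥ 0. -/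
/-!
Statement 15: an alternating-terms inequality for the Dirichlet-multinomial analysis.
-/

theorem statement15 (i n K N : ℕ) (hi : 1 ≤ i) (hn : 1 ≤ n) (hK : 2 ≤ K)
    (hKN : K ^ 2 ≤ N) (hnN : n ≤ N) :
    0 ≤ (1 / (Nat.factorial (2 * i) : ℝ)) * ((K : ℝ) / N) ^ (2 * i) *
          (Real.log (((K : ℝ) + n) / ((K : ℝ) - 1))) ^ (2 * i)
        - (1 / (Nat.factorial (2 * i + 1) : ℝ)) * ((K : ℝ) / N) ^ (2 * i + 1) *
          (Real.log (((K : ℝ) + n) / ((K : ℝ) + 2 * i))) ^ (2 * i + 1) := by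
  have hK2 : (2:ℝ) ≤ K := by exact_mod_cast hK
  have hN2 : (K:ℝ)^2 ≤ N := by exact_mod_cast hKN
  have hn1 : (1:ℝ) ≤ n := by exact_mod_cast hn
  have hnN' : (n:ℝ) ≤ N := by exact_mod_cast hnN
  have hi1 : (1:ℝ) ≤ i := by exact_mod_cast hi
  have hNpos : (0:ℝ) < N := by nlinarith
  have hKpos : (0:ℝ) < K := by linarith
  set c : ℝ := (K:ℝ)/N with hc
  set L1 : ℝ := Real.log (((K : ℝ) + n) / ((K : ℝ) - 1)) with hL1
  set L2 : ℝ := Real.log (((K : ℝ) + n) / ((K : ℝ) + 2 * i)) with hL2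
  have hcpos : 0 < c := by positivity
  have hKn : (0:ℝ) < (K:ℝ) + n := by linarith
  have hK1 : (0:ℝ) < (K:ℝ) - 1 := by linarith
  have hK2i : (0:ℝ) < (K:ℝ) + 2 * i := by linarith
  have hL12 : L2 ≤ L1 := by
    apply Real.log_le_log (by positivity)
    apply div_le_div_of_nonneg_left (by linarith) hK1 (by linarith)
  have hcL2 : c * L2 ≤ 1 := by
    have h1 : L2 ≤ (n:ℝ)/K := by
      calc L2 ≤ Real.log (((K:ℝ)+n)/K) := by
            apply Real.log_le_log (by positivity)
            apply div_le_div_of_nonneg_left (by linarith) hKpos (by linarith)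
        _ ≤ ((K:ℝ)+n)/K - 1 := Real.log_le_sub_one_of_pos (by positivity)
        _ = (n:ℝ)/K := by field_simp; ring
    calc c * L2 ≤ c * ((n:ℝ)/K) := by
          exact mul_le_mul_of_nonneg_left h1 hcpos.le
      _ = (n:ℝ)/N := by rw [hc, div_mul_div_comm, mul_comm (K:ℝ) n, mul_div_mul_right _ _ hKpos.ne']
      _ ≤ 1 := by rw [div_le_one hNpos]; exact hnN'
  have hfac : (0:ℝ) < (Nat.factorial (2*i) : ℝ) := by
    exact_mod_cast Nat.factorial_pos _
  rcases le_or_gt L2 0 with h | h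
  · have ht2 : (1 / (Nat.factorial (2 * i + 1) : ℝ)) * c ^ (2 * i + 1) *
        L2 ^ (2 * i + 1) ≤ 0 := by
      apply mul_nonpos_of_nonneg_of_nonpos (by positivity)
      exact Odd.pow_nonpos ⟨i, by ring⟩ h
    have ht1 : 0 ≤ (1 / (Nat.factorial (2 * i) : ℝ)) * c ^ (2 * i) * L1 ^ (2 * i) := by
      exact mul_nonneg (by positivity) ((even_two_mul i).pow_nonneg _)
    linarith
  · have hL1pos : 0 < L1 := lt_of_lt_of_le h hL12
    have key : (1 / (Nat.factorial (2 * i + 1) : ℝ)) * c ^ (2 * i + 1) * L2 ^ (2 * i + 1)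
        ≤ (1 / (Nat.factorial (2 * i) : ℝ)) * c ^ (2 * i) * L1 ^ (2 * i) := by
      have heq : (1 / (Nat.factorial (2 * i + 1) : ℝ)) * c ^ (2 * i + 1) * L2 ^ (2 * i + 1)
          = ((1 / (Nat.factorial (2 * i) : ℝ)) * c ^ (2 * i) * L2 ^ (2 * i)) *
            ((c * L2) * (1 / ((2*i:ℕ) + 1 : ℝ))) := by
        rw [Nat.factorial_succ, pow_succ, pow_succ]
        push_cast
        field_simp
      rw [heq]
      have h2i1 : (1:ℝ) ≤ ((2*i:ℕ) + 1 : ℝ) := by push_cast; linarith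
      have hstep : (c * L2) * (1 / ((2*i:ℕ) + 1 : ℝ)) ≤ 1 := by
        have hnn : 0 ≤ c * L2 := mul_nonneg hcpos.le h.le
        calc (c * L2) * (1 / ((2*i:ℕ) + 1 : ℝ)) ≤ 1 * 1 := by
              apply mul_le_mul hcL2 _ (by positivity) (by norm_num)
              rw [div_le_one (by positivity)]; exact h2i1
          _ = 1 := by norm_num
      have hbase : 0 ≤ (1 / (Nat.factorial (2 * i) : ℝ)) * c ^ (2 * i) * L2 ^ (2 * i) := by
        positivity
      calc ((1 / (Nat.factorial (2 * i) : ℝ)) * c ^ (2 * i) * L2 ^ (2 * i)) *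
            ((c * L2) * (1 / ((2*i:ℕ) + 1 : ℝ)))
          ≤ ((1 / (Nat.factorial (2 * i) : ℝ)) * c ^ (2 * i) * L2 ^ (2 * i)) * 1 :=
            mul_le_mul_of_nonneg_left hstep hbase
        _ = (1 / (Nat.factorial (2 * i) : ℝ)) * c ^ (2 * i) * L2 ^ (2 * i) := mul_one _
        _ ≤ (1 / (Nat.factorial (2 * i) : ℝ)) * c ^ (2 * i) * L1 ^ (2 * i) := by
            apply mul_le_mul_of_nonneg_left _ (by positivity)
            exact pow_le_pow_left₀ h.le hL12 _
    linarith
end
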